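/- arXiv:1702.04777 — 8 statements merged into one kernel-verified Lean document; each statement's English description precedes it below -/
import Mathlib

section
/- Fix real constants μ0 > 0 and H > 0, and for each integer n ≥ 1 let k_n = k_n(H) be the unique solution k of μ0 + k·tan(k·H) = 0 in ((2n−1)π/(2H), nπ/H). Then for every n ≥ 1 one has the exact identity k_n·H = nπ − arctan(μ0/k_n); consequently |k_n − nπ/H| ≤ μ0/(H·k_n) ≤ 2μ0/((2n−1)π), so that k_n = nπ/H + O(1/n) as n → ∞. -/
open Real Filter Asymptotics

lemma key (μ0 H : ℝ) (hμ0 : 0 < μ0) (hH : 0 < H) (k : ℕ → ℝ)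
    (hk : ∀ n : ℕ, 1 ≤ n →
      k n ∈ Set.Ioo ((2 * (n : ℝ) - 1) * π / (2 * H)) ((n : ℝ) * π / H) ∧
      μ0 + k n * Real.tan (k n * H) = 0) :
    ∀ n : ℕ, 1 ≤ n →
        k n * H = (n : ℝ) * π - Real.arctan (μ0 / k n) ∧
        |k n - (n : ℝ) * π / H| ≤ μ0 / (H * k n) ∧
        μ0 / (H * k n) ≤ 2 * μ0 / ((2 * (n : ℝ) - 1) * π) := by
  intro n hn
  obtain ⟨⟨hlo, hhi⟩, heq⟩ := hk n hn
  have hn1 : (1 : ℝ) ≤ (n : ℝ) := by exact_mod_cast hn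
  have h2n1 : (0 : ℝ) < 2 * (n : ℝ) - 1 := by linarith
  have hπ := Real.pi_pos
  have hklo : (2 * (n : ℝ) - 1) * π / (2 * H) < k n := hlo
  have hkpos : 0 < k n := lt_trans (by positivity) hklo
  -- k n * H bounds
  have hHk_lo : (2 * (n : ℝ) - 1) * π / 2 < k n * H := by
    have := (div_lt_iff₀ (by positivity : (0:ℝ) < 2 * H)).mp hklo
    nlinarith
  have hHk_hi : k n * H < (n : ℝ) * π := by
    have := (lt_div_iff₀ hH).mp hhi
    linarith
  -- θ := k n * H - n * π ∈ (-π/2, 0)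
  set θ : ℝ := k n * H - (n : ℝ) * π with hθ
  have hθlo : -(π / 2) < θ := by
    have : (2 * (n : ℝ) - 1) * π / 2 = (n : ℝ) * π - π / 2 := by ring
    rw [this] at hHk_lo
    simp only [hθ]; linarith
  have hθhi : θ < 0 := by simp only [hθ]; linarith
  have htan : Real.tan θ = -(μ0 / k n) := by
    have hper : Real.tan (θ + (n : ℝ) * π) = Real.tan θ := by
      have := (Real.tan_periodic.nat_mul n) θ
      simpa using this
    have hθn : θ + (n : ℝ) * π = k n * H := by simp [hθ]
    rw [hθn] at hper
    have : k n * Real.tan (k n * H) = -μ0 := by linarith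
    have htk : Real.tan (k n * H) = -μ0 / k n := by
      field_simp
      linarith
    rw [← hper, htk]; ring
  have harctan : θ = -Real.arctan (μ0 / k n) := by
    have := Real.arctan_tan hθlo (lt_trans hθhi (by positivity))
    rw [htan] at this
    rw [← this, Real.arctan_neg]
  have hid : k n * H = (n : ℝ) * π - Real.arctan (μ0 / k n) := by
    have : θ = k n * H - (n : ℝ) * π := hθ
    linarith [harctan]
  refine ⟨hid, ?_, ?_⟩
  · have hpos : 0 < μ0 / k n := by positivity
    have harc_pos : 0 < Real.arctan (μ0 / k n) := by
      have := Real.arctan_strictMono hpos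
      rwa [Real.arctan_zero] at this
    have harc_le : Real.arctan (μ0 / k n) ≤ μ0 / k n := by
      have h1 := Real.le_tan (le_of_lt harc_pos) (Real.arctan_lt_pi_div_two _)
      rwa [Real.tan_arctan] at h1
    have hdiff : k n - (n : ℝ) * π / H = -(Real.arctan (μ0 / k n)) / H := by
      field_simp
      linarith [hid]
    rw [hdiff, abs_div, abs_of_pos hH, abs_neg, abs_of_pos harc_pos]
    rw [div_le_div_iff₀ hH (by positivity)]
    calc Real.arctan (μ0 / k n) * (H * k n) ≤ (μ0 / k n) * (H * k n) := by
          apply mul_le_mul_of_nonneg_right harc_le (by positivity)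
      _ = μ0 * H := by field_simp
  · rw [div_le_div_iff₀ (by positivity) (by positivity)]
    have : (2 * (n : ℝ) - 1) * π ≤ 2 * (H * k n) := by
      have := (div_le_iff₀ (by positivity : (0:ℝ) < 2 * H)).mp (le_of_lt hklo)
      nlinarith
    nlinarith

/-- Asymptotics of the evanescent eigenvalues: `kₙ·H = nπ − arctan(μ₀/kₙ)`, hence
`|kₙ − nπ/H| ≤ μ₀/(H·kₙ) ≤ 2μ₀/((2n−1)π)`, so `kₙ = nπ/H + O(1/n)` (Eq. (2.5a)). -/
theorem eigenvalue_asymptotics (μ0 H : ℝ) (hμ0 : 0 < μ0) (hH : 0 < H) (k : ℕ → ℝ)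
    (hk : ∀ n : ℕ, 1 ≤ n →
      k n ∈ Set.Ioo ((2 * (n : ℝ) - 1) * π / (2 * H)) ((n : ℝ) * π / H) ∧
      μ0 + k n * Real.tan (k n * H) = 0) :
    (∀ n : ℕ, 1 ≤ n →
        k n * H = (n : ℝ) * π - Real.arctan (μ0 / k n) ∧
        |k n - (n : ℝ) * π / H| ≤ μ0 / (H * k n) ∧
        μ0 / (H * k n) ≤ 2 * μ0 / ((2 * (n : ℝ) - 1) * π)) ∧
    (fun n : ℕ => k n - (n : ℝ) * π / H) =O[atTop] (fun n : ℕ => 1 / (n : ℝ)) := by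
  have hmain := key μ0 H hμ0 hH k hk
  refine ⟨hmain, ?_⟩
  rw [isBigO_iff]
  refine ⟨2 * μ0 / π, ?_⟩
  filter_upwards [eventually_ge_atTop 1] with n hn
  obtain ⟨_, h1, h2⟩ := hmain n hn
  have hn1 : (1 : ℝ) ≤ (n : ℝ) := by exact_mod_cast hn
  have hπ := Real.pi_pos
  have h2n1 : (0 : ℝ) < 2 * (n : ℝ) - 1 := by linarith
  have h3 : 2 * μ0 / ((2 * (n : ℝ) - 1) * π) ≤ 2 * μ0 / π * |1 / (n : ℝ)| := by
    have heq : 2 * μ0 / π * |1 / (n : ℝ)| = 2 * μ0 / (π * (n : ℝ)) := by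
      rw [abs_of_pos (by positivity : (0:ℝ) < 1 / (n:ℝ))]
      field_simp
    rw [heq]
    apply div_le_div_of_nonneg_left (by positivity) (by positivity)
    nlinarith
  calc |k n - (n : ℝ) * π / H| ≤ μ0 / (H * k n) := h1
    _ ≤ 2 * μ0 / ((2 * (n : ℝ) - 1) * π) := h2
    _ ≤ 2 * μ0 / π * |1 / (n : ℝ)| := h3
end

section
/- Fix real constants μ0 > 0 and H > 0, and real numbers h, η with η + h = H. With k_0 the unique positive solution of μ0 = k·tanh(k·H), k_n (n ≥ 1) the unique solution of μ0 + k·tan(k·H) = 0 in ((2n−1)π/(2H), nπ/H), Z_0(z) = cosh(k_0(z+h))/cosh(k_0 H) and Z_n(z) = cos(k_n(z+h))/cos(k_n H) for n ≥ 1, the linear span of the family {Z_n : n ≥ 0} is dense in the Lebesgue space L²((−h, η)); that is, {Z_n}_{n≥0} is a complete orthogonal system in L²(−h, η). -/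
open Real MeasureTheory

local notation "⟪" x ", " y "⟫" => @inner ℝ _ _ x y




set_option maxHeartbeats 1000000 in
/-- Bari-type completeness criterion: an orthonormal family quadratically close
(beyond index N) to a Hilbert basis has dense span. -/
lemma bari_lemma {E : Type*} [NormedAddCommGroup E] [InnerProductSpace ℝ E] [CompleteSpace E]
    (v : ℕ → E) (hv : Orthonormal ℝ v)
    (hdense : ⊤ ≤ (Submodule.span ℝ (Set.range v)).topologicalClosure)
    (φ : ℕ → E) (hφ : Orthonormal ℝ φ)
    (N : ℕ) (b : ℕ → ℝ)
    (hb : ∀ m, N < m → ‖v m - φ m‖ ≤ b m)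
    (hbs : Summable (fun j : ℕ => b (j + (N + 1)) ^ 2))
    (hb1 : ∑' j : ℕ, b (j + (N + 1)) ^ 2 < 1) :
    (Submodule.span ℝ (Set.range φ)).topologicalClosure = ⊤ := by
  let e : HilbertBasis ℕ ℝ E := HilbertBasis.mk hv hdense
  have he : ∀ m : ℕ, (e : ℕ → E) m = v m := by
    intro m
    exact congrFun (HilbertBasis.coe_mk hv hdense) m
  rw [Submodule.topologicalClosure_eq_top_iff]
  by_contra hne
  obtain ⟨g, hgV, hg0⟩ := Submodule.exists_mem_ne_zero_of_ne_bot hne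
  -- key vanishing lemma
  have key : ∀ f : E, (∀ m, N < m → ⟪φ m, f⟫ = 0) →
      (∀ j : Fin (N + 1), ⟪v j, f⟫ = 0) → f = 0 := by
    intro f hfφ hfe
    have hsum : HasSum (fun m : ℕ => ⟪f, v m⟫ * ⟪v m, f⟫) ⟪f, f⟫ := by
      have h0 := e.hasSum_inner_mul_inner f f
      simpa only [he] using h0
    have hsq : ∀ m : ℕ, ⟪f, v m⟫ * ⟪v m, f⟫ = ⟪v m, f⟫ ^ 2 := by
      intro m; rw [real_inner_comm f (v m)]; ring
    have hsum2 : HasSum (fun m : ℕ => ⟪v m, f⟫ ^ 2) (‖f‖ ^ 2) := by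
      have := hsum
      simp_rw [hsq] at this
      rwa [real_inner_self_eq_norm_sq] at this
    have hS : Summable (fun m : ℕ => ⟪v m, f⟫ ^ 2) := hsum2.summable
    have hval : ‖f‖ ^ 2 = ∑' m : ℕ, ⟪v m, f⟫ ^ 2 := hsum2.tsum_eq.symm
    have hsplit := Summable.sum_add_tsum_nat_add (f := fun m : ℕ => ⟪v m, f⟫ ^ 2) (N + 1) hS
    have hzero : ∑ i ∈ Finset.range (N + 1), ⟪v i, f⟫ ^ 2 = 0 := by
      apply Finset.sum_eq_zero
      intro i hi
      have hi' : i < N + 1 := Finset.mem_range.mp hi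
      rw [hfe ⟨i, hi'⟩]; ring
    have htail : ∀ j : ℕ, ⟪v (j + (N + 1)), f⟫ ^ 2 ≤ b (j + (N + 1)) ^ 2 * ‖f‖ ^ 2 := by
      intro j
      have hNlt : N < j + (N + 1) := by omega
      have h1 : ⟪v (j + (N + 1)), f⟫ = ⟪v (j + (N + 1)) - φ (j + (N + 1)), f⟫ := by
        rw [inner_sub_left, hfφ _ hNlt]; ring
      have h2 : |⟪v (j + (N + 1)) - φ (j + (N + 1)), f⟫| ≤ b (j + (N + 1)) * ‖f‖ := by
        refine le_trans (abs_real_inner_le_norm _ _) ?_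
        exact mul_le_mul_of_nonneg_right (hb _ hNlt) (norm_nonneg f)
      calc ⟪v (j + (N + 1)), f⟫ ^ 2 = |⟪v (j + (N + 1)) - φ (j + (N + 1)), f⟫| ^ 2 := by
            rw [← h1, sq_abs]
        _ ≤ (b (j + (N + 1)) * ‖f‖) ^ 2 := by
            apply pow_le_pow_left₀ (abs_nonneg _) h2 2
        _ = b (j + (N + 1)) ^ 2 * ‖f‖ ^ 2 := by ring
    by_contra hf0
    have hfpos : 0 < ‖f‖ ^ 2 := by
      have := norm_pos_iff.mpr hf0
      positivity
    have hle : ‖f‖ ^ 2 ≤ (∑' j : ℕ, b (j + (N + 1)) ^ 2) * ‖f‖ ^ 2 := by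
      have h1 : ∑' j : ℕ, ⟪v (j + (N + 1)), f⟫ ^ 2 ≤
          ∑' j : ℕ, b (j + (N + 1)) ^ 2 * ‖f‖ ^ 2 := by
        apply Summable.tsum_le_tsum htail
        · exact (summable_nat_add_iff (N + 1)).mpr hS
        · exact hbs.mul_right _
      calc ‖f‖ ^ 2 = ∑ i ∈ Finset.range (N + 1), ⟪v i, f⟫ ^ 2
              + ∑' j : ℕ, ⟪v (j + (N + 1)), f⟫ ^ 2 := by rw [hsplit, ← hval]
        _ = ∑' j : ℕ, ⟪v (j + (N + 1)), f⟫ ^ 2 := by rw [hzero, zero_add]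
        _ ≤ ∑' j : ℕ, b (j + (N + 1)) ^ 2 * ‖f‖ ^ 2 := h1
        _ = (∑' j : ℕ, b (j + (N + 1)) ^ 2) * ‖f‖ ^ 2 := by rw [tsum_mul_right]
    nlinarith
  -- normalized g
  set g' : E := ‖g‖⁻¹ • g with hg'def
  have hng : ‖g‖ ≠ 0 := norm_ne_zero_iff.mpr hg0
  have hg'norm : ‖g'‖ = 1 := by
    rw [hg'def, norm_smul, norm_inv, norm_norm, inv_mul_cancel₀ hng]
  have hφg : ∀ m, ⟪φ m, g'⟫ = 0 := by
    intro m
    have hmem : φ m ∈ Submodule.span ℝ (Set.range φ) := Submodule.subset_span ⟨m, rfl⟩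
    have := (Submodule.mem_orthogonal _ g).mp hgV (φ m) hmem
    rw [hg'def, real_inner_smul_right, this, mul_zero]
  -- the family ψ
  set ψ : Fin (N + 2) → E := fun i => if h : (i : ℕ) < N + 1 then φ i else g' with hψdef
  have hψorth : Orthonormal ℝ ψ := by
    rw [orthonormal_iff_ite]
    intro i j
    by_cases hi : (i : ℕ) < N + 1 <;> by_cases hj : (j : ℕ) < N + 1 <;>
      simp only [hψdef, hi, hj, dif_pos, dif_neg, not_false_iff]
    · have := (orthonormal_iff_ite.mp hφ) i j
      rw [this]
      by_cases hij : (i : ℕ) = (j : ℕ)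
      · simp [Fin.ext_iff, hij]
      · simp [Fin.ext_iff, hij]
    · rw [hφg i]
      have : i ≠ j := by
        intro hcon; rw [hcon] at hi; exact hj hi
      simp [this]
    · rw [real_inner_comm, hφg j]
      have : i ≠ j := by
        intro hcon; rw [hcon] at hi; exact hi hj
      simp [this]
    · have hij : i = j := by
        have hi2 : (i : ℕ) = N + 1 := by omega
        have hj2 : (j : ℕ) = N + 1 := by omega
        exact Fin.ext (hi2.trans hj2.symm)
      simp only [hij, if_pos rfl]
      rw [real_inner_self_eq_norm_sq, hg'norm]
      norm_num
  -- the coordinates family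
  set χ : Fin (N + 2) → (Fin (N + 1) → ℝ) := fun i j => ⟪v j, ψ i⟫ with hχdef
  have hχind : LinearIndependent ℝ χ := by
    rw [Fintype.linearIndependent_iff]
    intro c hc
    set f : E := ∑ i : Fin (N + 2), c i • ψ i with hfdef
    have hf0 : f = 0 := by
      apply key
      · intro m hm
        rw [hfdef, inner_sum]
        apply Finset.sum_eq_zero
        intro i _
        rw [real_inner_smul_right]
        rcases lt_or_ge (i : ℕ) (N + 1) with h | h
        · have : ψ i = φ (i : ℕ) := by simp only [hψdef]; exact dif_pos h
          rw [this]
          have hne : m ≠ (i : ℕ) := by omega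
          rw [(orthonormal_iff_ite.mp hφ) m i]
          simp [hne]
        · have : ψ i = g' := by simp only [hψdef]; exact dif_neg (not_lt.mpr h)
          rw [this, hφg, mul_zero]
      · intro j
        have := congrFun hc j
        simp only [Finset.sum_apply, Pi.smul_apply, Pi.zero_apply, smul_eq_mul] at this
        rw [hfdef, inner_sum]
        simp_rw [real_inner_smul_right]
        simpa [hχdef] using this
    have := Fintype.linearIndependent_iff.mp hψorth.linearIndependent c (by rw [← hfdef, hf0])
    exact this
  have hcard := hχind.fintype_card_le_finrank
  simp [Module.finrank_pi] at hcard



private lemma hda_lin (a h : ℝ) (z : ℝ) : HasDerivAt (fun z : ℝ => a * (z + h)) a z := by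
  simpa using ((hasDerivAt_id z).add_const h).const_mul a

/-- FTC: ∫ cos(a(z+h))cos(b(z+h)) over (-h, η) -/
lemma wg_integral_cos_mul_cos (a b h η H : ℝ) (hηh : η + h = H) (hab : a ^ 2 ≠ b ^ 2) :
    ∫ z in (-h)..η, Real.cos (a * (z + h)) * Real.cos (b * (z + h)) =
      (a * Real.sin (a * H) * Real.cos (b * H) - b * Real.cos (a * H) * Real.sin (b * H)) /
        (a ^ 2 - b ^ 2) := by
  have hd : ∀ z ∈ Set.uIcc (-h) η, HasDerivAt
      (fun z => (a * Real.sin (a * (z + h)) * Real.cos (b * (z + h))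
        - b * Real.cos (a * (z + h)) * Real.sin (b * (z + h))) / (a ^ 2 - b ^ 2))
      (Real.cos (a * (z + h)) * Real.cos (b * (z + h))) z := by
    intro z _
    have hsa := (hda_lin a h z).sin
    have hca := (hda_lin a h z).cos
    have hsb := (hda_lin b h z).sin
    have hcb := (hda_lin b h z).cos
    have hF := ((((hsa.mul hcb).const_mul a).sub ((hca.mul hsb).const_mul b)).div_const
      (a ^ 2 - b ^ 2))
    refine HasDerivAt.congr_deriv (hF.congr_of_eventuallyEq (Filter.EventuallyEq.of_eq ?_)) ?_
    · funext x; simp only [Pi.sub_apply, Pi.mul_apply]; ring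
    · have h2 : a ^ 2 - b ^ 2 ≠ 0 := sub_ne_zero.mpr hab
      field_simp
      ring
  rw [intervalIntegral.integral_eq_sub_of_hasDerivAt hd (by
    apply Continuous.intervalIntegrable; continuity)]
  have e1 : η + h = H := hηh
  have e2 : -h + h = 0 := by ring
  rw [e1, e2]
  simp [Real.sin_zero, Real.cos_zero]

/-- FTC: ∫ cosh(a(z+h))cos(b(z+h)) over (-h, η) -/
lemma wg_integral_cosh_mul_cos (a b h η H : ℝ) (hηh : η + h = H) (hab : a ^ 2 + b ^ 2 ≠ 0) :
    ∫ z in (-h)..η, Real.cosh (a * (z + h)) * Real.cos (b * (z + h)) =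
      (a * Real.sinh (a * H) * Real.cos (b * H) + b * Real.cosh (a * H) * Real.sin (b * H)) /
        (a ^ 2 + b ^ 2) := by
  have hd : ∀ z ∈ Set.uIcc (-h) η, HasDerivAt
      (fun z => (a * Real.sinh (a * (z + h)) * Real.cos (b * (z + h))
        + b * Real.cosh (a * (z + h)) * Real.sin (b * (z + h))) / (a ^ 2 + b ^ 2))
      (Real.cosh (a * (z + h)) * Real.cos (b * (z + h))) z := by
    intro z _
    have hsa := (hda_lin a h z).sinh
    have hca := (hda_lin a h z).cosh
    have hsb := (hda_lin b h z).sin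
    have hcb := (hda_lin b h z).cos
    have hF := ((((hsa.mul hcb).const_mul a).add ((hca.mul hsb).const_mul b)).div_const
      (a ^ 2 + b ^ 2))
    refine HasDerivAt.congr_deriv (hF.congr_of_eventuallyEq (Filter.EventuallyEq.of_eq ?_)) ?_
    · funext x; simp only [Pi.add_apply, Pi.mul_apply]; ring
    · field_simp
      ring
  rw [intervalIntegral.integral_eq_sub_of_hasDerivAt hd (by
    apply Continuous.intervalIntegrable; continuity)]
  have e2 : -h + h = 0 := by ring
  rw [hηh, e2]
  simp [Real.sin_zero, Real.sinh_zero]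

/-- FTC: ∫ cos²(a(z+h)) over (-h, η) -/
lemma wg_integral_cos_sq (a h η H : ℝ) (hηh : η + h = H) (ha : a ≠ 0) :
    ∫ z in (-h)..η, Real.cos (a * (z + h)) * Real.cos (a * (z + h)) =
      H / 2 + Real.sin (2 * (a * H)) / (4 * a) := by
  have hd : ∀ z ∈ Set.uIcc (-h) η, HasDerivAt
      (fun z => (z + h) / 2 + Real.sin (2 * (a * (z + h))) / (4 * a))
      (Real.cos (a * (z + h)) * Real.cos (a * (z + h))) z := by
    intro z _
    have h1 : HasDerivAt (fun z : ℝ => 2 * (a * (z + h))) (2 * a) z := by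
      simpa using (hda_lin a h z).const_mul 2
    have hs := h1.sin
    have hlin : HasDerivAt (fun z : ℝ => (z + h) / 2) (1 / 2) z := by
      simpa using ((hasDerivAt_id z).add_const h).div_const 2
    have hF := hlin.add (hs.div_const (4 * a))
    have h2 : Real.cos (2 * (a * (z + h))) = 2 * Real.cos (a * (z + h)) ^ 2 - 1 :=
      Real.cos_two_mul _
    refine hF.congr_deriv ?_
    rw [h2]
    field_simp
    ring
  rw [intervalIntegral.integral_eq_sub_of_hasDerivAt hd (by
    apply Continuous.intervalIntegrable; continuity)]
  have e2 : -h + h = 0 := by ring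
  rw [hηh, e2]
  norm_num

/-- FTC: ∫ cosh²(a(z+h)) over (-h, η) -/
lemma wg_integral_cosh_sq (a h η H : ℝ) (hηh : η + h = H) (ha : a ≠ 0) :
    ∫ z in (-h)..η, Real.cosh (a * (z + h)) * Real.cosh (a * (z + h)) =
      H / 2 + Real.sinh (2 * (a * H)) / (4 * a) := by
  have hd : ∀ z ∈ Set.uIcc (-h) η, HasDerivAt
      (fun z => (z + h) / 2 + Real.sinh (2 * (a * (z + h))) / (4 * a))
      (Real.cosh (a * (z + h)) * Real.cosh (a * (z + h))) z := by
    intro z _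
    have h1 : HasDerivAt (fun z : ℝ => 2 * (a * (z + h))) (2 * a) z := by
      simpa using (hda_lin a h z).const_mul 2
    have hs := h1.sinh
    have hlin : HasDerivAt (fun z : ℝ => (z + h) / 2) (1 / 2) z := by
      simpa using ((hasDerivAt_id z).add_const h).div_const 2
    have hF := hlin.add (hs.div_const (4 * a))
    have h3 := Real.cosh_sq_sub_sinh_sq (a * (z + h))
    have h2 : Real.cosh (2 * (a * (z + h))) = 2 * Real.cosh (a * (z + h)) ^ 2 - 1 := by
      rw [Real.cosh_two_mul]; nlinarith [h3]
    refine hF.congr_deriv ?_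
    rw [h2]
    field_simp
    ring
  rw [intervalIntegral.integral_eq_sub_of_hasDerivAt hd (by
    apply Continuous.intervalIntegrable; continuity)]
  have e2 : -h + h = 0 := by ring
  rw [hηh, e2]
  norm_num




lemma wg_isFiniteMeasure (a b : ℝ) : IsFiniteMeasure (volume.restrict (Set.Ioo a b)) := by
  constructor
  rw [Measure.restrict_apply_univ]
  exact measure_Ioo_lt_top

lemma wg_memLp (u : ℝ → ℝ) (hu : Continuous u) (a b C : ℝ)
    (hbd : ∀ z ∈ Set.Ioo a b, |u z| ≤ C) :
    MemLp u 2 (volume.restrict (Set.Ioo a b)) := by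
  haveI := wg_isFiniteMeasure a b
  apply MemLp.of_bound hu.aestronglyMeasurable C
  refine (ae_restrict_iff' measurableSet_Ioo).mpr (ae_of_all _ (fun z hz => ?_))
  simpa using hbd z hz

lemma wg_integral_restrict (a b : ℝ) (hab : a ≤ b) (w : ℝ → ℝ) :
    ∫ z, w z ∂(volume.restrict (Set.Ioo a b)) = ∫ z in a..b, w z := by
  rw [intervalIntegral.integral_of_le hab, ← MeasureTheory.integral_Ioc_eq_integral_Ioo]

lemma wg_inner_toLp (a b : ℝ) (hab : a ≤ b) (u v : ℝ → ℝ)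
    (hu : MemLp u 2 (volume.restrict (Set.Ioo a b)))
    (hv : MemLp v 2 (volume.restrict (Set.Ioo a b))) :
    ⟪hu.toLp u, hv.toLp v⟫ = ∫ z in a..b, u z * v z := by
  rw [MeasureTheory.L2.inner_def]
  rw [← wg_integral_restrict a b hab (fun z => u z * v z)]
  apply integral_congr_ae
  filter_upwards [hu.coeFn_toLp, hv.coeFn_toLp] with z hzu hzv
  rw [hzu, hzv]
  simp [RCLike.inner_apply, mul_comm]

lemma wg_norm_toLp_sq (a b : ℝ) (hab : a ≤ b) (u : ℝ → ℝ)
    (hu : MemLp u 2 (volume.restrict (Set.Ioo a b))) :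
    ‖hu.toLp u‖ ^ 2 = ∫ z in a..b, u z * u z := by
  rw [← real_inner_self_eq_norm_sq]
  exact wg_inner_toLp a b hab u u hu hu



lemma wg_root_facts (μ0 H k : ℝ) (m : ℕ) (hμ0 : 0 < μ0) (hH : 0 < H) (hm : 1 ≤ m)
    (hlo : (2 * (m : ℝ) - 1) * π / (2 * H) < k) (hhi : k < (m : ℝ) * π / H)
    (heq : μ0 + k * Real.tan (k * H) = 0) :
    0 < k ∧ (2 * (m : ℝ) - 1) * π / 2 < k * H ∧ k * H < (m : ℝ) * π ∧
      Real.cos (k * H) ≠ 0 ∧ k * Real.sin (k * H) = -μ0 * Real.cos (k * H) ∧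
      (m : ℝ) * π - k * H ≤ μ0 / k := by
  have hm1 : (1 : ℝ) ≤ (m : ℝ) := by exact_mod_cast hm
  have hpi := Real.pi_pos
  have hk : 0 < k := by
    have h0 : 0 < (2 * (m : ℝ) - 1) * π / (2 * H) := by
      apply div_pos
      · nlinarith
      · linarith
    linarith
  have hlo' : (2 * (m : ℝ) - 1) * π / 2 < k * H := by
    rw [div_lt_iff₀ (by linarith : (0:ℝ) < 2 * H)] at hlo
    nlinarith
  have hhi' : k * H < (m : ℝ) * π := by
    rw [lt_div_iff₀ hH] at hhi
    linarith
  have hcos : Real.cos (k * H) ≠ 0 := by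
    intro hc
    obtain ⟨j, hj⟩ := Real.cos_eq_zero_iff.mp hc
    rw [hj] at hlo' hhi'
    have h1 : (2 * (m : ℝ) - 1) < 2 * (j : ℝ) + 1 := by nlinarith
    have h2 : 2 * (j : ℝ) + 1 < 2 * (m : ℝ) := by nlinarith
    have h1' : 2 * (m : ℤ) - 1 < 2 * j + 1 := by exact_mod_cast h1
    have h2' : 2 * (j : ℤ) + 1 < 2 * m := by exact_mod_cast h2
    omega
  have hsin : k * Real.sin (k * H) = -μ0 * Real.cos (k * H) := by
    rw [Real.tan_eq_sin_div_cos] at heq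
    field_simp at heq
    linarith
  have htan : Real.tan ((m : ℝ) * π - k * H) = μ0 / k := by
    have hper : Real.tan (k * H - (m : ℝ) * π) = Real.tan (k * H) := by
      have := Real.tan_periodic.sub_nat_mul_eq (x := k * H) (n := m)
      simpa using this
    have h1 : Real.tan ((m : ℝ) * π - k * H) = -Real.tan (k * H) := by
      rw [show (m : ℝ) * π - k * H = -(k * H - (m : ℝ) * π) by ring, Real.tan_neg, hper]
    rw [h1]
    have hkt : Real.tan (k * H) = -μ0 / k := by
      have hk0 : k ≠ 0 := ne_of_gt hk
      field_simp
      linarith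
    rw [hkt]
    field_simp
  have htlt : (m : ℝ) * π - k * H ≤ μ0 / k := by
    have ht0 : 0 < (m : ℝ) * π - k * H := by linarith
    have ht2 : (m : ℝ) * π - k * H < π / 2 := by nlinarith
    have := Real.lt_tan ht0 ht2
    rw [htan] at this
    linarith
  exact ⟨hk, hlo', hhi', hcos, hsin, htlt⟩




-- closeness of normalizations
lemma wg_normalize_close {E : Type*} [NormedAddCommGroup E] [InnerProductSpace ℝ E]
    (u v : E) (hu : u ≠ 0) (hv : v ≠ 0) :
    ‖‖u‖⁻¹ • u - ‖v‖⁻¹ • v‖ ≤ 2 * ‖u - v‖ / ‖v‖ := by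
  have hnu : (0:ℝ) < ‖u‖ := norm_pos_iff.mpr hu
  have hnv : (0:ℝ) < ‖v‖ := norm_pos_iff.mpr hv
  have hdec : ‖u‖⁻¹ • u - ‖v‖⁻¹ • v = ‖v‖⁻¹ • (u - v) + (‖u‖⁻¹ - ‖v‖⁻¹) • u := by
    module
  calc ‖‖u‖⁻¹ • u - ‖v‖⁻¹ • v‖ ≤ ‖‖v‖⁻¹ • (u - v)‖ + ‖(‖u‖⁻¹ - ‖v‖⁻¹) • u‖ := by
        rw [hdec]; exact norm_add_le _ _
    _ = ‖v‖⁻¹ * ‖u - v‖ + |‖u‖⁻¹ - ‖v‖⁻¹| * ‖u‖ := by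
        rw [norm_smul, norm_smul]
        simp [abs_of_pos, hnv, Real.norm_eq_abs, abs_of_nonneg (le_of_lt (inv_pos.mpr hnv))]
    _ ≤ ‖v‖⁻¹ * ‖u - v‖ + (‖u - v‖ / (‖u‖ * ‖v‖)) * ‖u‖ := by
        apply add_le_add le_rfl
        apply mul_le_mul_of_nonneg_right _ (norm_nonneg u)
        have h1 : ‖u‖⁻¹ - ‖v‖⁻¹ = (‖v‖ - ‖u‖) / (‖u‖ * ‖v‖) := by
          field_simp
        have h2 : |‖v‖ - ‖u‖| ≤ ‖u - v‖ := by
          calc |‖v‖ - ‖u‖| ≤ ‖v - u‖ := abs_norm_sub_norm_le v u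
            _ = ‖u - v‖ := norm_sub_rev v u
        calc |‖u‖⁻¹ - ‖v‖⁻¹| = |‖v‖ - ‖u‖| / (‖u‖ * ‖v‖) := by
              rw [h1, abs_div, abs_of_pos (mul_pos hnu hnv)]
          _ ≤ ‖u - v‖ / (‖u‖ * ‖v‖) := by gcongr
    _ = 2 * ‖u - v‖ / ‖v‖ := by
        field_simp
        ring

-- orthonormalization of a pairwise-orthogonal family of nonzero vectors
lemma wg_orthonormal_normalize {E : Type*} [NormedAddCommGroup E] [InnerProductSpace ℝ E]
    (v : ℕ → E) (hnz : ∀ m, v m ≠ 0) (horth : ∀ n m, n ≠ m → ⟪v n, v m⟫ = 0) :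
    Orthonormal ℝ (fun m => ‖v m‖⁻¹ • v m) := by
  rw [orthonormal_iff_ite]
  intro i j
  rw [real_inner_smul_left, real_inner_smul_right]
  by_cases hij : i = j
  · subst hij
    rw [real_inner_self_eq_norm_sq]
    have : ‖v i‖ ≠ 0 := norm_ne_zero_iff.mpr (hnz i)
    rw [if_pos rfl]
    field_simp
  · rw [horth i j hij]
    simp [hij]

-- telescoping tail bound: ∑' j, (C/(j+N+1))² ≤ C²/N
lemma wg_tail_bound (C : ℝ) (N : ℕ) (hN : 1 ≤ N) :
    Summable (fun j : ℕ => (C / ((j : ℝ) + N + 1)) ^ 2) ∧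
    ∑' j : ℕ, (C / ((j : ℝ) + N + 1)) ^ 2 ≤ C ^ 2 / N := by
  have hNR : (0:ℝ) < N := by exact_mod_cast hN
  -- telescoping sum
  have hterm : ∀ j : ℕ, (1 : ℝ) / (((j : ℝ) + N) * ((j : ℝ) + N + 1))
      = 1 / ((j : ℝ) + N) - 1 / ((j : ℝ) + N + 1) := by
    intro j
    have h1 : (0:ℝ) < (j : ℝ) + N := by positivity
    have h2 : (0:ℝ) < (j : ℝ) + N + 1 := by positivity
    field_simp
    ring
  have hts : HasSum (fun j : ℕ => (1 : ℝ) / (((j : ℝ) + N) * ((j : ℝ) + N + 1))) (1 / N) := by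
    have hnn : ∀ j : ℕ, (0:ℝ) ≤ 1 / (((j : ℝ) + N) * ((j : ℝ) + N + 1)) := by
      intro j; positivity
    rw [hasSum_iff_tendsto_nat_of_nonneg hnn]
    have hsum : ∀ M : ℕ, ∑ j ∈ Finset.range M, (1 : ℝ) / (((j : ℝ) + N) * ((j : ℝ) + N + 1))
        = 1 / N - 1 / ((M : ℝ) + N) := by
      intro M
      induction M with
      | zero => simp
      | succ M ih =>
        rw [Finset.sum_range_succ, ih, hterm M]
        have h1 : (0:ℝ) < (M : ℝ) + N := by positivity
        have h2 : (0:ℝ) < (M : ℝ) + N + 1 := by positivity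
        push_cast
        ring
    simp_rw [hsum]
    have hat : Filter.Tendsto (fun M : ℕ => ((M : ℝ) + N)) Filter.atTop Filter.atTop :=
      Filter.tendsto_atTop_add_const_right _ _ tendsto_natCast_atTop_atTop
    have h0 : Filter.Tendsto (fun M : ℕ => 1 / ((M : ℝ) + N)) Filter.atTop (nhds 0) := by
      simp only [one_div]; exact hat.inv_tendsto_atTop
    have := Filter.Tendsto.const_sub (1 / (N:ℝ)) h0
    simpa using this
  have hle : ∀ j : ℕ, (C / ((j : ℝ) + N + 1)) ^ 2
      ≤ C ^ 2 * (1 / (((j : ℝ) + N) * ((j : ℝ) + N + 1))) := by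
    intro j
    have h1 : (0:ℝ) < (j : ℝ) + N := by positivity
    have h2 : (0:ℝ) < (j : ℝ) + N + 1 := by positivity
    rw [div_pow, div_le_iff₀ (by positivity)]
    have : C ^ 2 * (1 / (((j : ℝ) + N) * ((j : ℝ) + N + 1))) * ((j : ℝ) + N + 1) ^ 2
        = C ^ 2 * (((j : ℝ) + N + 1) / ((j : ℝ) + N)) := by
      field_simp
    rw [this]
    have hfrac : (1:ℝ) ≤ ((j : ℝ) + N + 1) / ((j : ℝ) + N) := by
      rw [le_div_iff₀ h1]
      linarith
    nlinarith [sq_nonneg C]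
  have hsummable : Summable (fun j : ℕ => (C / ((j : ℝ) + N + 1)) ^ 2) := by
    apply Summable.of_nonneg_of_le (fun j => by positivity) hle
    exact (hts.summable.mul_left (C ^ 2))
  constructor
  · exact hsummable
  · calc ∑' j : ℕ, (C / ((j : ℝ) + N + 1)) ^ 2
        ≤ ∑' j : ℕ, C ^ 2 * (1 / (((j : ℝ) + N) * ((j : ℝ) + N + 1))) :=
          Summable.tsum_le_tsum hle hsummable (hts.summable.mul_left _)
      _ = C ^ 2 * (1 / N) := by rw [tsum_mul_left, hts.tsum_eq]
      _ = C ^ 2 / N := by ring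




noncomputable def wgC (h η H : ℝ) (m : ℕ) : C(Set.Icc (-h) η, ℝ) :=
  ⟨fun x => Real.cos ((m : ℝ) * π / H * ((x : ℝ) + h)), by continuity⟩

@[simp] lemma wgC_apply (h η H : ℝ) (m : ℕ) (x : Set.Icc (-h) η) :
    wgC h η H m x = Real.cos ((m : ℝ) * π / H * ((x : ℝ) + h)) := rfl

lemma wgC_span_mul (h η H : ℝ) :
    ∀ x y : C(Set.Icc (-h) η, ℝ),
      x ∈ Submodule.span ℝ (Set.range (wgC h η H)) →
      y ∈ Submodule.span ℝ (Set.range (wgC h η H)) →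
      x * y ∈ Submodule.span ℝ (Set.range (wgC h η H)) := by
  have hprod : ∀ n m : ℕ, m ≤ n → wgC h η H n * wgC h η H m =
      (1/2 : ℝ) • wgC h η H (n + m) + (1/2 : ℝ) • wgC h η H (n - m) := by
    intro n m hmn
    ext x
    have hsub : ((n - m : ℕ) : ℝ) = (n : ℝ) - (m : ℝ) := by rw [Nat.cast_sub hmn]
    simp only [ContinuousMap.mul_apply, ContinuousMap.add_apply, ContinuousMap.smul_apply,
      wgC_apply, smul_eq_mul, Nat.cast_add, hsub]
    have e1 : ((n : ℝ) + (m : ℝ)) * π / H * ((x : ℝ) + h) =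
        (n : ℝ) * π / H * ((x : ℝ) + h) + (m : ℝ) * π / H * ((x : ℝ) + h) := by ring
    have e2 : ((n : ℝ) - (m : ℝ)) * π / H * ((x : ℝ) + h) =
        (n : ℝ) * π / H * ((x : ℝ) + h) - (m : ℝ) * π / H * ((x : ℝ) + h) := by ring
    rw [e1, e2, Real.cos_add, Real.cos_sub]
    ring
  have hgen : ∀ n m : ℕ, wgC h η H n * wgC h η H m ∈
      Submodule.span ℝ (Set.range (wgC h η H)) := by
    intro n m
    rcases le_total m n with hmn | hnm
    · rw [hprod n m hmn]
      exact Submodule.add_mem _ (Submodule.smul_mem _ _ (Submodule.subset_span ⟨n + m, rfl⟩))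
        (Submodule.smul_mem _ _ (Submodule.subset_span ⟨n - m, rfl⟩))
    · rw [mul_comm, hprod m n hnm]
      exact Submodule.add_mem _ (Submodule.smul_mem _ _ (Submodule.subset_span ⟨m + n, rfl⟩))
        (Submodule.smul_mem _ _ (Submodule.subset_span ⟨m - n, rfl⟩))
  intro x y hx hy
  induction hx using Submodule.span_induction with
  | mem u hu =>
    obtain ⟨n, rfl⟩ := hu
    induction hy using Submodule.span_induction with
    | mem v hv => obtain ⟨m, rfl⟩ := hv; exact hgen n m
    | zero => rw [mul_zero]; exact Submodule.zero_mem _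
    | add v w _ _ hv hw => rw [mul_add]; exact Submodule.add_mem _ hv hw
    | smul a v _ hv => rw [mul_smul_comm]; exact Submodule.smul_mem _ _ hv
  | zero => rw [zero_mul]; exact Submodule.zero_mem _
  | add u v _ _ hu hv => rw [add_mul]; exact Submodule.add_mem _ hu hv
  | smul a u _ hu => rw [smul_mul_assoc]; exact Submodule.smul_mem _ _ hu

lemma wgC_span_one (h η H : ℝ) :
    (1 : C(Set.Icc (-h) η, ℝ)) ∈ Submodule.span ℝ (Set.range (wgC h η H)) := by
  have : (1 : C(Set.Icc (-h) η, ℝ)) = wgC h η H 0 := by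
    ext x; simp
  rw [this]
  exact Submodule.subset_span ⟨0, rfl⟩

/-- Stone–Weierstrass approximation by cosine combinations. -/
lemma wgC_approx (h η H : ℝ) (hH : 0 < H) (hηh : η + h = H)
    (u : C(Set.Icc (-h) η, ℝ)) (ε : ℝ) (hε : 0 < ε) :
    ∃ p ∈ Submodule.span ℝ (Set.range (wgC h η H)), dist u p < ε := by
  have hle : -h ≤ η := by linarith
  set A : Subalgebra ℝ C(Set.Icc (-h) η, ℝ) :=
    (Submodule.span ℝ (Set.range (wgC h η H))).toSubalgebra (wgC_span_one h η H)
      (wgC_span_mul h η H) with hA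
  have hsep : A.SeparatesPoints := by
    intro x y hxy
    refine ⟨wgC h η H 1, ⟨wgC h η H 1, Submodule.subset_span ⟨1, rfl⟩, rfl⟩, ?_⟩
    simp only [wgC_apply, Nat.cast_one]
    intro hcon
    apply hxy
    have hπH : 0 < π / H := div_pos Real.pi_pos hH
    have hmem : ∀ w : Set.Icc (-h) η, π / H * ((w : ℝ) + h) ∈ Set.Icc 0 π := by
      intro w
      obtain ⟨hw1, hw2⟩ := w.2
      constructor
      · apply mul_nonneg (le_of_lt hπH); linarith
      · calc π / H * ((w : ℝ) + h) ≤ π / H * H := by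
              apply mul_le_mul_of_nonneg_left _ (le_of_lt hπH); linarith
          _ = π := by field_simp
    have hcon' : Real.cos (π / H * ((x : ℝ) + h)) = Real.cos (π / H * ((y : ℝ) + h)) := by
      rw [show π / H * ((x : ℝ) + h) = (1 : ℝ) * π / H * ((x : ℝ) + h) by ring,
        show π / H * ((y : ℝ) + h) = (1 : ℝ) * π / H * ((y : ℝ) + h) by ring]
      exact hcon
    have heq := Real.injOn_cos (hmem x) (hmem y) hcon'
    have : ((x : ℝ) + h) = ((y : ℝ) + h) := mul_left_cancel₀ (ne_of_gt hπH) heq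
    exact Subtype.ext (by linarith)
  have hSW := ContinuousMap.subalgebra_topologicalClosure_eq_top_of_separatesPoints A hsep
  have hmem : u ∈ closure (A : Set C(Set.Icc (-h) η, ℝ)) := by
    have h1 : u ∈ (A.topologicalClosure : Set C(Set.Icc (-h) η, ℝ)) := by rw [hSW]; trivial
    rwa [Subalgebra.topologicalClosure_coe] at h1
  obtain ⟨p, hpA, hdist⟩ := Metric.mem_closure_iff.mp hmem ε hε
  exact ⟨p, Submodule.mem_toSubalgebra.mp hpA, hdist⟩

/-- If an `L²` function on `(-h, η)` is orthogonal to all cosines `cos (mπ(z+h)/H)`,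
then it is zero. -/
lemma wg_cos_moments_zero (h η H : ℝ) (hH : 0 < H) (hηh : η + h = H)
    (f : Lp ℝ 2 (volume.restrict (Set.Ioo (-h) η)))
    (hf : ∀ m : ℕ, ∫ z, Real.cos ((m : ℝ) * π / H * (z + h)) * f z
      ∂(volume.restrict (Set.Ioo (-h) η)) = 0) :
    f = 0 := by
  haveI : IsFiniteMeasure (volume.restrict (Set.Ioo (-h) η)) := by
    constructor; rw [Measure.restrict_apply_univ]; exact measure_Ioo_lt_top
  have hle : -h ≤ η := by linarith
  have hfint : Integrable (⇑f) (volume.restrict (Set.Ioo (-h) η)) :=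
    MemLp.integrable (by norm_num) (Lp.memLp f)
  -- extension of functions on Icc to ℝ
  have hext_int : ∀ u : C(Set.Icc (-h) η, ℝ),
      Integrable (fun z => u (Set.projIcc (-h) η hle z) * f z)
        (volume.restrict (Set.Ioo (-h) η)) := by
    intro u
    exact hfint.bdd_mul ((u.continuous.comp continuous_projIcc).aestronglyMeasurable)
      (ae_of_all _ fun z => u.norm_coe_le_norm _)
  -- J vanishes on the span
  have hJ0 : ∀ u : C(Set.Icc (-h) η, ℝ), u ∈ Submodule.span ℝ (Set.range (wgC h η H)) →
      ∫ z, u (Set.projIcc (-h) η hle z) * f z ∂(volume.restrict (Set.Ioo (-h) η)) = 0 := by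
    intro u hu
    induction hu using Submodule.span_induction with
    | mem u hu =>
      obtain ⟨m, rfl⟩ := hu
      rw [← hf m]
      apply integral_congr_ae
      refine (ae_restrict_iff' measurableSet_Ioo).mpr (ae_of_all _ (fun z hz => ?_))
      have hproj : Set.projIcc (-h) η hle z = ⟨z, Set.mem_Icc_of_Ioo hz⟩ :=
        Set.projIcc_of_mem hle (Set.mem_Icc_of_Ioo hz)
      simp only [hproj, wgC_apply]
    | zero => simp
    | add u v hu hv h1 h2 =>
      have heq : (fun z => (u + v) (Set.projIcc (-h) η hle z) * f z)
          = fun z => u (Set.projIcc (-h) η hle z) * f z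
            + v (Set.projIcc (-h) η hle z) * f z := by
        funext z
        simp
        ring
      rw [heq, integral_add (hext_int u) (hext_int v), h1, h2, add_zero]
    | smul a u hu h1 =>
      have heq : (fun z => (a • u) (Set.projIcc (-h) η hle z) * f z)
          = fun z => a * (u (Set.projIcc (-h) η hle z) * f z) := by
        funext z
        simp
        ring
      rw [heq, integral_const_mul, h1, mul_zero]
  -- J vanishes on bounded continuous functions
  have hBCF : ∀ w : BoundedContinuousFunction ℝ ℝ,
      ∫ z, w z * f z ∂(volume.restrict (Set.Ioo (-h) η)) = 0 := by
    intro w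
    have hwint : Integrable (fun z => w z * f z) (volume.restrict (Set.Ioo (-h) η)) :=
      hfint.bdd_mul w.continuous.aestronglyMeasurable (ae_of_all _ fun z => w.norm_coe_le_norm _)
    set uc : C(Set.Icc (-h) η, ℝ) := ContinuousMap.restrict (Set.Icc (-h) η) w.toContinuousMap
      with huc
    have heq1 : ∫ z, w z * f z ∂(volume.restrict (Set.Ioo (-h) η))
        = ∫ z, uc (Set.projIcc (-h) η hle z) * f z ∂(volume.restrict (Set.Ioo (-h) η)) := by
      apply integral_congr_ae
      refine (ae_restrict_iff' measurableSet_Ioo).mpr (ae_of_all _ (fun z hz => ?_))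
      have hproj : Set.projIcc (-h) η hle z = ⟨z, Set.mem_Icc_of_Ioo hz⟩ :=
        Set.projIcc_of_mem hle (Set.mem_Icc_of_Ioo hz)
      simp only [hproj, huc]
      simp
    rw [heq1]
    have habs : ∀ ε : ℝ, 0 < ε →
        |∫ z, uc (Set.projIcc (-h) η hle z) * f z ∂(volume.restrict (Set.Ioo (-h) η))|
          ≤ ε * ∫ z, |f z| ∂(volume.restrict (Set.Ioo (-h) η)) := by
      intro ε hε
      obtain ⟨p, hpS, hdist⟩ := wgC_approx h η H hH hηh uc ε hε
      have hdiff : ∫ z, uc (Set.projIcc (-h) η hle z) * f z ∂(volume.restrict (Set.Ioo (-h) η))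
          = ∫ z, (uc (Set.projIcc (-h) η hle z) - p (Set.projIcc (-h) η hle z)) * f z
              ∂(volume.restrict (Set.Ioo (-h) η)) := by
        have heq2 : (fun z => (uc (Set.projIcc (-h) η hle z) - p (Set.projIcc (-h) η hle z)) * f z)
            = fun z => uc (Set.projIcc (-h) η hle z) * f z
              - p (Set.projIcc (-h) η hle z) * f z := by
          funext z; ring
        rw [heq2, integral_sub (hext_int uc) (hext_int p), hJ0 p hpS, sub_zero]
      rw [hdiff]
      calc |∫ z, (uc (Set.projIcc (-h) η hle z) - p (Set.projIcc (-h) η hle z)) * f z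
              ∂(volume.restrict (Set.Ioo (-h) η))|
          ≤ ∫ z, |(uc (Set.projIcc (-h) η hle z) - p (Set.projIcc (-h) η hle z)) * f z|
              ∂(volume.restrict (Set.Ioo (-h) η)) := by
            rw [← Real.norm_eq_abs]
            refine le_trans (norm_integral_le_integral_norm _) ?_
            simp_rw [Real.norm_eq_abs]
            exact le_refl _
        _ ≤ ∫ z, ε * |f z| ∂(volume.restrict (Set.Ioo (-h) η)) := by
            apply integral_mono_of_nonneg (ae_of_all _ (fun z => abs_nonneg _))
              (hfint.abs.const_mul ε)
            apply ae_of_all _ (fun z => ?_)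
            dsimp only
            rw [abs_mul]
            apply mul_le_mul_of_nonneg_right _ (abs_nonneg _)
            have h1 : uc (Set.projIcc (-h) η hle z) - p (Set.projIcc (-h) η hle z)
                = (uc - p) (Set.projIcc (-h) η hle z) := by simp
            rw [h1]
            calc |(uc - p) (Set.projIcc (-h) η hle z)| ≤ ‖uc - p‖ :=
                  (uc - p).norm_coe_le_norm _
              _ ≤ ε := by
                  rw [← dist_eq_norm]
                  exact le_of_lt hdist
        _ = ε * ∫ z, |f z| ∂(volume.restrict (Set.Ioo (-h) η)) := integral_const_mul ε _
    by_contra hne0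
    have hpos : 0 < |∫ z, uc (Set.projIcc (-h) η hle z) * f z
        ∂(volume.restrict (Set.Ioo (-h) η))| := abs_pos.mpr hne0
    set I := |∫ z, uc (Set.projIcc (-h) η hle z) * f z ∂(volume.restrict (Set.Ioo (-h) η))|
    set M := ∫ z, |f z| ∂(volume.restrict (Set.Ioo (-h) η)) with hM
    have hMnn : (0:ℝ) ≤ M := integral_nonneg (fun z => abs_nonneg _)
    have h2 := habs (I / (2 * (M + 1))) (by positivity)
    have hlt : I / (2 * (M + 1)) * M < I := by
      rw [div_mul_eq_mul_div, div_lt_iff₀ (by positivity)]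
      nlinarith
    linarith
  -- conclude f = 0 by density of bounded continuous functions
  have hdense := MeasureTheory.Lp.boundedContinuousFunction_dense ℝ
    (volume.restrict (Set.Ioo (-h) η)) (p := 2) (by norm_num)
  have horth : (Lp.boundedContinuousFunction ℝ 2 (volume.restrict (Set.Ioo (-h) η)) :
      Set (Lp ℝ 2 (volume.restrict (Set.Ioo (-h) η)))) ⊆
      {x : Lp ℝ 2 (volume.restrict (Set.Ioo (-h) η)) | ⟪x, f⟫ = 0} := by
    intro x hx
    obtain ⟨w, hw⟩ := (Lp.mem_boundedContinuousFunction_iff).mp hx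
    have hxw : (⇑x : ℝ → ℝ) =ᵐ[volume.restrict (Set.Ioo (-h) η)] ⇑w := by
      have h1 : (⇑x : ℝ → ℝ)
          =ᵐ[volume.restrict (Set.Ioo (-h) η)]
            ⇑(ContinuousMap.toAEEqFun (volume.restrict (Set.Ioo (-h) η)) w.toContinuousMap) := by
        rw [hw]
      exact h1.trans (ContinuousMap.coeFn_toAEEqFun _ w.toContinuousMap)
    have hxf : ⟪x, f⟫ = ∫ z, w z * f z ∂(volume.restrict (Set.Ioo (-h) η)) := by
      rw [MeasureTheory.L2.inner_def]
      apply integral_congr_ae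
      filter_upwards [hxw] with z hz
      rw [hz]
      simp [RCLike.inner_apply, mul_comm]
    rw [Set.mem_setOf_eq, hxf]
    exact hBCF w
  have hclosed : IsClosed {x : Lp ℝ 2 (volume.restrict (Set.Ioo (-h) η)) | ⟪x, f⟫ = 0} := by
    have : Continuous (fun x : Lp ℝ 2 (volume.restrict (Set.Ioo (-h) η)) => ⟪x, f⟫) :=
      continuous_id.inner continuous_const
    exact isClosed_eq this continuous_const
  have huniv : (Set.univ : Set (Lp ℝ 2 (volume.restrict (Set.Ioo (-h) η)))) ⊆
      {x : Lp ℝ 2 (volume.restrict (Set.Ioo (-h) η)) | ⟪x, f⟫ = 0} := by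
    rw [← hdense.closure_eq]
    exact hclosed.closure_subset_iff.mpr horth
  exact inner_self_eq_zero.mp (huniv (Set.mem_univ f))




-- |cos x - cos y| ≤ |x - y|
lemma wg_cos_lip (x y : ℝ) : |Real.cos x - Real.cos y| ≤ |x - y| := by
  rw [Real.cos_sub_cos]
  rw [abs_mul, abs_mul, abs_neg]
  have h1 : |Real.sin ((x + y) / 2)| ≤ 1 := Real.abs_sin_le_one _
  have h2 : |Real.sin ((x - y) / 2)| ≤ |(x - y) / 2| := Real.abs_sin_le_abs
  calc |(2:ℝ)| * |Real.sin ((x + y) / 2)| * |Real.sin ((x - y) / 2)|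
      ≤ |(2:ℝ)| * 1 * |(x - y) / 2| := by
        apply mul_le_mul (mul_le_mul_of_nonneg_left h1 (abs_nonneg _)) h2 (abs_nonneg _)
        positivity
    _ = |x - y| := by
        rw [abs_div]
        norm_num
        ring

-- nonneg squares
lemma wg_sq_ne (x y : ℝ) (hx : 0 ≤ x) (hy : 0 ≤ y) (hne : x ≠ y) : x ^ 2 ≠ y ^ 2 := by
  intro hsq
  apply hne
  have h3 : (x - y) * (x + y) = 0 := by nlinarith
  rcases mul_eq_zero.mp h3 with h | h
  · linarith
  · have hx0 : x = 0 := by linarith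
    have hy0 : y = 0 := by linarith
    rw [hx0, hy0]

-- generator functions
noncomputable def wgu (k : ℕ → ℝ) (h : ℝ) : ℕ → ℝ → ℝ
  | 0 => fun z => Real.cosh (k 0 * (z + h))
  | (m+1) => fun z => Real.cos (k (m+1) * (z + h))

@[simp] lemma wgu_zero (k : ℕ → ℝ) (h z : ℝ) : wgu k h 0 z = Real.cosh (k 0 * (z + h)) := rfl
@[simp] lemma wgu_succ (k : ℕ → ℝ) (h z : ℝ) (m : ℕ) :
    wgu k h (m+1) z = Real.cos (k (m+1) * (z + h)) := rfl

noncomputable def wgc (H h : ℝ) (m : ℕ) : ℝ → ℝ := fun z => Real.cos ((m : ℝ) * π / H * (z + h))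

@[simp] lemma wgc_def (H h : ℝ) (m : ℕ) (z : ℝ) :
    wgc H h m z = Real.cos ((m : ℝ) * π / H * (z + h)) := rfl

lemma wgu_continuous (k : ℕ → ℝ) (h : ℝ) (m : ℕ) : Continuous (wgu k h m) := by
  cases m with
  | zero => exact Real.continuous_cosh.comp (by continuity)
  | succ i => exact Real.continuous_cos.comp (by continuity)

lemma wgc_continuous (H h : ℝ) (m : ℕ) : Continuous (wgc H h m) :=
  Real.continuous_cos.comp (by continuity)

lemma wg_memLp_continuous (u : ℝ → ℝ) (hu : Continuous u) (a b : ℝ) :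
    MemLp u 2 (volume.restrict (Set.Ioo a b)) := by
  obtain ⟨C, hC⟩ := (isCompact_Icc (a := a) (b := b)).exists_bound_of_continuousOn hu.continuousOn
  exact wg_memLp u hu a b C
    (fun z hz => by simpa [Real.norm_eq_abs] using hC z (Set.mem_Icc_of_Ioo hz))

noncomputable def wguLp (k : ℕ → ℝ) (h η : ℝ) (m : ℕ) :
    Lp ℝ 2 (volume.restrict (Set.Ioo (-h) η)) :=
  (wg_memLp_continuous (wgu k h m) (wgu_continuous k h m) (-h) η).toLp (wgu k h m)

noncomputable def wgcLp (H h η : ℝ) (m : ℕ) :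
    Lp ℝ 2 (volume.restrict (Set.Ioo (-h) η)) :=
  (wg_memLp_continuous (wgc H h m) (wgc_continuous H h m) (-h) η).toLp (wgc H h m)

lemma wguLp_inner (k : ℕ → ℝ) (h η : ℝ) (hle : -h ≤ η) (n m : ℕ) :
    ⟪wguLp k h η n, wguLp k h η m⟫ = ∫ z in (-h)..η, wgu k h n z * wgu k h m z :=
  wg_inner_toLp (-h) η hle _ _ _ _

lemma wgcLp_inner (H h η : ℝ) (hle : -h ≤ η) (n m : ℕ) :
    ⟪wgcLp H h η n, wgcLp H h η m⟫ = ∫ z in (-h)..η, wgc H h n z * wgc H h m z :=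
  wg_inner_toLp (-h) η hle _ _ _ _

lemma wguLp_norm_sq (k : ℕ → ℝ) (h η : ℝ) (hle : -h ≤ η) (m : ℕ) :
    ‖wguLp k h η m‖ ^ 2 = ∫ z in (-h)..η, wgu k h m z * wgu k h m z :=
  wg_norm_toLp_sq (-h) η hle _ _

lemma wgcLp_norm_sq (H h η : ℝ) (hle : -h ≤ η) (m : ℕ) :
    ‖wgcLp H h η m‖ ^ 2 = ∫ z in (-h)..η, wgc H h m z * wgc H h m z :=
  wg_norm_toLp_sq (-h) η hle _ _

lemma wguLp_coeFn (k : ℕ → ℝ) (h η : ℝ) (m : ℕ) :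
    ⇑(wguLp k h η m) =ᵐ[volume.restrict (Set.Ioo (-h) η)] wgu k h m :=
  MemLp.coeFn_toLp _

lemma wgcLp_coeFn (H h η : ℝ) (m : ℕ) :
    ⇑(wgcLp H h η m) =ᵐ[volume.restrict (Set.Ioo (-h) η)] wgc H h m :=
  MemLp.coeFn_toLp _




set_option maxHeartbeats 2000000 in
/-- Completeness of the eigenfunctions `{Zₙ : n ≥ 0}` of the reference waveguide:
the linear span of the family is dense in `L²((−h, η))`. -/
theorem eigenfunction_completeness (μ0 H h η : ℝ) (hμ0 : 0 < μ0) (hH : 0 < H)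
    (hηh : η + h = H) (k : ℕ → ℝ)
    (hk0 : 0 < k 0 ∧ μ0 = k 0 * Real.tanh (k 0 * H))
    (hk : ∀ n : ℕ, 1 ≤ n →
      k n ∈ Set.Ioo ((2 * (n : ℝ) - 1) * π / (2 * H)) ((n : ℝ) * π / H) ∧
      μ0 + k n * Real.tan (k n * H) = 0)
    (Z : ℕ → ℝ → ℝ)
    (hZ0 : ∀ z, Z 0 z = Real.cosh (k 0 * (z + h)) / Real.cosh (k 0 * H))
    (hZn : ∀ n : ℕ, 1 ≤ n → ∀ z, Z n z = Real.cos (k n * (z + h)) / Real.cos (k n * H)) :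
    Dense ((Submodule.span ℝ
      {f : Lp ℝ 2 (volume.restrict (Set.Ioo (-h) η)) |
        ∃ n : ℕ, (f : ℝ → ℝ) =ᵐ[volume.restrict (Set.Ioo (-h) η)] Z n} :
      Submodule ℝ (Lp ℝ 2 (volume.restrict (Set.Ioo (-h) η)))) :
      Set (Lp ℝ 2 (volume.restrict (Set.Ioo (-h) η)))) := by
  classical
  obtain ⟨hk0pos, hk0eq⟩ := hk0
  have hpi := Real.pi_pos
  have hle : -h ≤ η := by linarith
  -- root facts
  have hfacts : ∀ m : ℕ, 1 ≤ m → 0 < k m ∧ (2 * (m : ℝ) - 1) * π / 2 < k m * H ∧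
      k m * H < (m : ℝ) * π ∧ Real.cos (k m * H) ≠ 0 ∧
      k m * Real.sin (k m * H) = -μ0 * Real.cos (k m * H) ∧
      (m : ℝ) * π - k m * H ≤ μ0 / k m := by
    intro m hm
    obtain ⟨⟨hlo, hhi⟩, heq⟩ := hk m hm
    exact wg_root_facts μ0 H (k m) m hμ0 hH hm hlo hhi heq
  have hk0sinh : k 0 * Real.sinh (k 0 * H) = μ0 * Real.cosh (k 0 * H) := by
    have hch : Real.cosh (k 0 * H) ≠ 0 := ne_of_gt (Real.cosh_pos _)
    rw [Real.tanh_eq_sinh_div_cosh] at hk0eq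
    field_simp at hk0eq
    linarith
  -- monotonicity of the k's
  have hkmono : ∀ n m : ℕ, 1 ≤ n → n < m → k n < k m := by
    intro n m hn hnm
    obtain ⟨⟨_, hhi_n⟩, _⟩ := hk n hn
    obtain ⟨⟨hlo_m, _⟩, _⟩ := hk m (by omega)
    have hcast : (n : ℝ) + 1 ≤ (m : ℝ) := by exact_mod_cast hnm
    have hmid : (n : ℝ) * π / H ≤ (2 * (m : ℝ) - 1) * π / (2 * H) := by
      rw [div_le_div_iff₀ hH (by linarith)]
      have hkey := mul_le_mul_of_nonneg_right
        (show (2:ℝ) * (n:ℝ) ≤ 2 * (m:ℝ) - 1 by linarith) (le_of_lt (mul_pos hpi hH))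
      nlinarith [hkey]
    linarith
  -- orthogonality of the u-family
  have hmix : ∀ i : ℕ, ⟪wguLp k h η 0, wguLp k h η (i+1)⟫ = 0 := by
    intro i
    obtain ⟨hkp, hlo', hhi', hcos, hsin, _⟩ := hfacts (i+1) (by omega)
    rw [wguLp_inner k h η hle 0 (i+1)]
    simp only [wgu_zero, wgu_succ]
    rw [wg_integral_cosh_mul_cos (k 0) (k (i+1)) h η H hηh
      (by positivity)]
    rw [div_eq_zero_iff]
    left
    linear_combination Real.cos (k (i+1) * H) * hk0sinh + Real.cosh (k 0 * H) * hsin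
  have hInnerU : ∀ n m : ℕ, n ≠ m → ⟪wguLp k h η n, wguLp k h η m⟫ = 0 := by
    have hcc : ∀ i j : ℕ, i ≠ j →
        ⟪wguLp k h η (i+1), wguLp k h η (j+1)⟫ = 0 := by
      intro i j hij
      obtain ⟨hkpi, _, _, hcosi, hsini, _⟩ := hfacts (i+1) (by omega)
      obtain ⟨hkpj, _, _, hcosj, hsinj, _⟩ := hfacts (j+1) (by omega)
      have hkne : k (i+1) ≠ k (j+1) := by
        rcases lt_or_gt_of_ne hij with hlt | hgt
        · exact ne_of_lt (hkmono (i+1) (j+1) (by omega) (by omega))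
        · exact (ne_of_lt (hkmono (j+1) (i+1) (by omega) (by omega))).symm
      rw [wguLp_inner k h η hle (i+1) (j+1)]
      simp only [wgu_succ]
      rw [wg_integral_cos_mul_cos (k (i+1)) (k (j+1)) h η H hηh
        (wg_sq_ne _ _ (le_of_lt hkpi) (le_of_lt hkpj) hkne)]
      rw [div_eq_zero_iff]
      left
      linear_combination Real.cos (k (j+1) * H) * hsini - Real.cos (k (i+1) * H) * hsinj
    intro n m hnm
    match n, m with
    | 0, 0 => exact absurd rfl hnm
    | 0, (j+1) => exact hmix j
    | (i+1), 0 => rw [real_inner_comm]; exact hmix i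
    | (i+1), (j+1) => exact hcc i j (by omega)
  -- orthogonality of the cosine family
  have hInnerC : ∀ n m : ℕ, n ≠ m → ⟪wgcLp H h η n, wgcLp H h η m⟫ = 0 := by
    intro n m hnm
    have hne : (n : ℝ) * π / H ≠ (m : ℝ) * π / H := by
      intro hcon
      apply hnm
      field_simp at hcon
      exact_mod_cast hcon
    rw [wgcLp_inner H h η hle n m]
    simp only [wgc_def]
    rw [wg_integral_cos_mul_cos ((n : ℝ) * π / H) ((m : ℝ) * π / H) h η H hηh
      (wg_sq_ne _ _ (by positivity) (by positivity) hne)]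
    have han : (n : ℝ) * π / H * H = (n : ℝ) * π := by field_simp
    have ham : (m : ℝ) * π / H * H = (m : ℝ) * π := by field_simp
    rw [han, ham, Real.sin_nat_mul_pi, Real.sin_nat_mul_pi]
    norm_num
  -- norms of the cosine family
  have hNormCsq1 : ∀ m : ℕ, 1 ≤ m → ‖wgcLp H h η m‖ ^ 2 = H / 2 := by
    intro m hm
    have hmR : (1:ℝ) ≤ (m:ℝ) := by exact_mod_cast hm
    rw [wgcLp_norm_sq H h η hle m]
    simp only [wgc_def]
    rw [wg_integral_cos_sq ((m : ℝ) * π / H) h η H hηh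
      (by positivity)]
    have ham : (m : ℝ) * π / H * H = (m : ℝ) * π := by field_simp
    rw [ham]
    have h2m : 2 * ((m : ℝ) * π) = ((2 * m : ℕ) : ℝ) * π := by push_cast; ring
    rw [h2m, Real.sin_nat_mul_pi]
    norm_num
  have hNormC0 : ‖wgcLp H h η 0‖ ^ 2 = H := by
    rw [wgcLp_norm_sq H h η hle 0]
    simp only [wgc_def, Nat.cast_zero, zero_mul, zero_div, Real.cos_zero, one_mul]
    rw [intervalIntegral.integral_const]
    simp only [smul_eq_mul, mul_one]
    linarith
  have hNormCpos : ∀ m : ℕ, 0 < ‖wgcLp H h η m‖ ^ 2 := by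
    intro m
    match m with
    | 0 => rw [hNormC0]; exact hH
    | (i+1) => rw [hNormCsq1 (i+1) (by omega)]; linarith
  -- positivity of u-family norms
  have hNormUpos : ∀ m : ℕ, 0 < ‖wguLp k h η m‖ ^ 2 := by
    intro m
    match m with
    | 0 =>
      rw [wguLp_norm_sq k h η hle 0]
      simp only [wgu_zero]
      rw [wg_integral_cosh_sq (k 0) h η H hηh (ne_of_gt hk0pos)]
      have hs : 0 ≤ Real.sinh (2 * (k 0 * H)) := by
        rw [← Real.sinh_zero]
        apply Real.sinh_le_sinh.mpr
        positivity
      have : 0 ≤ Real.sinh (2 * (k 0 * H)) / (4 * k 0) := by positivity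
      linarith
    | (i+1) =>
      obtain ⟨hkp, hlo', hhi', _, _, _⟩ := hfacts (i+1) (by omega)
      rw [wguLp_norm_sq k h η hle (i+1)]
      simp only [wgu_succ]
      rw [wg_integral_cos_sq (k (i+1)) h η H hηh (ne_of_gt hkp)]
      have hsin : -1 ≤ Real.sin (2 * (k (i+1) * H)) := Real.neg_one_le_sin _
      have hkH : π / 2 < k (i+1) * H := by
        have : π / 2 ≤ (2 * ((i:ℝ)+1) - 1) * π / 2 := by
          have : (1:ℝ) ≤ 2 * ((i:ℝ)+1) - 1 := by
            have : (0:ℝ) ≤ (i:ℝ) := Nat.cast_nonneg i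
            linarith
          rw [div_le_div_iff₀ (by norm_num) (by norm_num)]
          nlinarith
        push_cast at hlo' ⊢
        linarith
    -- so k (i+1) * H > π/2 > 1, hence 1/(4 k) < H/2
      have h14 : 1 / (4 * k (i+1)) < H / 2 := by
        rw [div_lt_div_iff₀ (by positivity) (by norm_num)]
        nlinarith [Real.pi_gt_three]
      have h4k : (0:ℝ) < 4 * k (i+1) := by linarith
      have hge : -(1 / (4 * k (i+1))) ≤ Real.sin (2 * (k (i+1) * H)) / (4 * k (i+1)) := by
        rw [← neg_div]
        exact (div_le_div_iff_of_pos_right h4k).mpr hsin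
      linarith
  have hCne : ∀ m : ℕ, wgcLp H h η m ≠ 0 := by
    intro m hcon
    have := hNormCpos m
    rw [hcon] at this
    simp at this
  have hUne : ∀ m : ℕ, wguLp k h η m ≠ 0 := by
    intro m hcon
    have := hNormUpos m
    rw [hcon] at this
    simp at this
  -- orthonormal families
  have honC : Orthonormal ℝ (fun m => ‖wgcLp H h η m‖⁻¹ • wgcLp H h η m) :=
    wg_orthonormal_normalize _ hCne hInnerC
  have honU : Orthonormal ℝ (fun m => ‖wguLp k h η m‖⁻¹ • wguLp k h η m) :=
    wg_orthonormal_normalize _ hUne hInnerU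
  -- density of the cosine span
  have hdenseC : ⊤ ≤ (Submodule.span ℝ
      (Set.range (fun m => ‖wgcLp H h η m‖⁻¹ • wgcLp H h η m))).topologicalClosure := by
    have heq : (Submodule.span ℝ
        (Set.range (fun m => ‖wgcLp H h η m‖⁻¹ • wgcLp H h η m))).topologicalClosure = ⊤ := by
      rw [Submodule.topologicalClosure_eq_top_iff]
      rw [Submodule.eq_bot_iff]
      intro f hf
      apply wg_cos_moments_zero h η H hH hηh f
      intro m
      have hnorm : ‖wgcLp H h η m‖ ≠ 0 := norm_ne_zero_iff.mpr (hCne m)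
      have hmemspan : wgcLp H h η m ∈ Submodule.span ℝ
          (Set.range (fun m => ‖wgcLp H h η m‖⁻¹ • wgcLp H h η m)) := by
        have hid : wgcLp H h η m
            = ‖wgcLp H h η m‖ • (‖wgcLp H h η m‖⁻¹ • wgcLp H h η m) :=
          (smul_inv_smul₀ hnorm _).symm
        rw [hid]
        exact Submodule.smul_mem _ _ (Submodule.subset_span ⟨m, rfl⟩)
      have h0 : ⟪wgcLp H h η m, f⟫ = 0 :=
        (Submodule.mem_orthogonal _ f).mp hf _ hmemspan
      rw [MeasureTheory.L2.inner_def] at h0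
      rw [← h0]
      apply integral_congr_ae
      filter_upwards [wgcLp_coeFn H h η m] with z hz
      rw [hz]
      simp [RCLike.inner_apply, wgc_def, mul_comm]
    exact le_of_eq heq.symm
  -- the closeness constant
  set Cc : ℝ := 4 * Real.sqrt 2 * μ0 * H / π with hCc
  have hCcnn : 0 ≤ Cc := by
    rw [hCc]
    positivity
  set N : ℕ := ⌊Cc ^ 2⌋₊ + 1 with hN
  have hN1 : 1 ≤ N := by omega
  -- the closeness estimate
  have hclose : ∀ m : ℕ, N < m →
      ‖(‖wgcLp H h η m‖⁻¹ • wgcLp H h η m)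
        - (‖wguLp k h η m‖⁻¹ • wguLp k h η m)‖ ≤ Cc / m := by
    intro m hNm
    obtain ⟨i, rfl⟩ : ∃ i, m = i + 1 := ⟨m - 1, by omega⟩
    obtain ⟨hkp, hlo', hhi', hcos, hsin, heps⟩ := hfacts (i+1) (by omega)
    set m := i + 1
    have hm1R : (1:ℝ) ≤ (m : ℝ) := by exact_mod_cast (by omega : 1 ≤ m)
    set ε : ℝ := (m : ℝ) * π - k m * H with hεdef
    have hεnn : 0 ≤ ε := le_of_lt (by rw [hεdef]; linarith)
    -- step 1 : L² distance of the unnormalized generators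
    have hdiff : ‖wguLp k h η m - wgcLp H h η m‖ ≤ Real.sqrt H * ε := by
      have hnormsq : ‖wguLp k h η m - wgcLp H h η m‖ ^ 2
          = ∫ z in (-h)..η, (wgu k h m - wgc H h m) z * (wgu k h m - wgc H h m) z := by
        unfold wguLp wgcLp
        rw [← MemLp.toLp_sub (wg_memLp_continuous (wgu k h m) (wgu_continuous k h m) (-h) η)
          (wg_memLp_continuous (wgc H h m) (wgc_continuous H h m) (-h) η)]
        exact wg_norm_toLp_sq (-h) η hle _ _
      have hpt : ∀ z ∈ Set.Icc (-h) η,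
          (wgu k h m - wgc H h m) z * (wgu k h m - wgc H h m) z ≤ ε ^ 2 := by
        intro z hz
        obtain ⟨hz1, hz2⟩ := hz
        simp only [Pi.sub_apply]
        have hzh1 : 0 ≤ z + h := by linarith
        have hzh2 : z + h ≤ H := by linarith
        have hlip : |Real.cos (k m * (z + h)) - Real.cos ((m : ℝ) * π / H * (z + h))|
            ≤ |k m * (z + h) - (m : ℝ) * π / H * (z + h)| := wg_cos_lip _ _
        have harg : |k m * (z + h) - (m : ℝ) * π / H * (z + h)| ≤ ε := by
          rw [show k m * (z + h) - (m : ℝ) * π / H * (z + h)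
            = (k m - (m : ℝ) * π / H) * (z + h) by ring]
          rw [abs_mul]
          have h1 : |k m - (m : ℝ) * π / H| = (m : ℝ) * π / H - k m := by
            rw [abs_of_nonpos (by
              have : k m < (m : ℝ) * π / H := by
                rw [lt_div_iff₀ hH]
                linarith
              linarith)]
            ring
          rw [h1, abs_of_nonneg hzh1]
          calc ((m : ℝ) * π / H - k m) * (z + h) ≤ ((m : ℝ) * π / H - k m) * H := by
                apply mul_le_mul_of_nonneg_left hzh2
                have : k m < (m : ℝ) * π / H := by
                  rw [lt_div_iff₀ hH]
                  linarith
                linarith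
            _ = ε := by
                rw [hεdef]
                field_simp
        have hd : wgu k h m z - wgc H h m z
            = Real.cos (k m * (z + h)) - Real.cos ((m : ℝ) * π / H * (z + h)) := by
          simp [wgu_succ, wgc_def]; rfl
        rw [hd]
        calc (Real.cos (k m * (z + h)) - Real.cos ((m : ℝ) * π / H * (z + h)))
              * (Real.cos (k m * (z + h)) - Real.cos ((m : ℝ) * π / H * (z + h)))
            = |Real.cos (k m * (z + h)) - Real.cos ((m : ℝ) * π / H * (z + h))| ^ 2 := by
              rw [sq_abs]; ring
          _ ≤ ε ^ 2 := by
              apply pow_le_pow_left₀ (abs_nonneg _) (le_trans hlip harg)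
      have hint : ∫ z in (-h)..η, (wgu k h m - wgc H h m) z * (wgu k h m - wgc H h m) z
          ≤ H * ε ^ 2 := by
        have hmono := intervalIntegral.integral_mono_on hle
          (Continuous.intervalIntegrable (by
            exact ((wgu_continuous k h m).sub (wgc_continuous H h m)).mul
              ((wgu_continuous k h m).sub (wgc_continuous H h m))) _ _)
          (intervalIntegrable_const (μ := volume) (a := -h) (b := η) (c := ε ^ 2)) hpt
        calc ∫ z in (-h)..η, (wgu k h m - wgc H h m) z * (wgu k h m - wgc H h m) z
            ≤ ∫ _ in (-h)..η, ε ^ 2 := hmono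
          _ = (η - (-h)) • ε ^ 2 := intervalIntegral.integral_const _
          _ = H * ε ^ 2 := by
              simp only [smul_eq_mul]
              congr 1
              linarith
      have hsq : ‖wguLp k h η m - wgcLp H h η m‖ ^ 2 ≤ (Real.sqrt H * ε) ^ 2 := by
        rw [hnormsq]
        calc _ ≤ H * ε ^ 2 := hint
          _ = (Real.sqrt H * ε) ^ 2 := by
              rw [mul_pow, Real.sq_sqrt (le_of_lt hH)]
      have := Real.sqrt_le_sqrt hsq
      rwa [Real.sqrt_sq (norm_nonneg _), Real.sqrt_sq (by positivity)] at this
    -- step 2 : the norm of the cosine generator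
    have hnc : ‖wgcLp H h η m‖ = Real.sqrt (H / 2) := by
      rw [← Real.sqrt_sq (norm_nonneg (wgcLp H h η m)), hNormCsq1 m (by omega)]
    have hsqrtpos : 0 < Real.sqrt (H / 2) := Real.sqrt_pos.mpr (by linarith)
    -- step 3 : assemble
    have hstep : ‖(‖wguLp k h η m‖⁻¹ • wguLp k h η m)
        - (‖wgcLp H h η m‖⁻¹ • wgcLp H h η m)‖
        ≤ 2 * (Real.sqrt H * ε) / Real.sqrt (H / 2) := by
      calc ‖(‖wguLp k h η m‖⁻¹ • wguLp k h η m) - (‖wgcLp H h η m‖⁻¹ • wgcLp H h η m)‖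
          ≤ 2 * ‖wguLp k h η m - wgcLp H h η m‖ / ‖wgcLp H h η m‖ :=
            wg_normalize_close _ _ (hUne m) (hCne m)
        _ ≤ 2 * (Real.sqrt H * ε) / Real.sqrt (H / 2) := by
            rw [hnc]
            gcongr
    have hsqrtH : Real.sqrt H = Real.sqrt 2 * Real.sqrt (H / 2) := by
      rw [← Real.sqrt_mul (by norm_num : (0:ℝ) ≤ 2)]
      congr 1
      ring
    have hstep2 : 2 * (Real.sqrt H * ε) / Real.sqrt (H / 2) = 2 * Real.sqrt 2 * ε := by
      rw [hsqrtH]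
      field_simp
    have hεbound : ε ≤ 2 * μ0 * H / ((m : ℝ) * π) := by
      have h1 : (m : ℝ) * π / (2 * H) ≤ k m := by
        have h2 : (m : ℝ) * π / (2 * H) ≤ (2 * (m : ℝ) - 1) * π / (2 * H) := by
          apply div_le_div_of_nonneg_right _ (by linarith)
          nlinarith
        obtain ⟨⟨hlo, _⟩, _⟩ := hk m (by omega)
        linarith
      have h3 : μ0 / k m ≤ μ0 / ((m : ℝ) * π / (2 * H)) := by
        apply div_le_div_of_nonneg_left (le_of_lt hμ0) _ h1
        positivity
      have h4 : μ0 / ((m : ℝ) * π / (2 * H)) = 2 * μ0 * H / ((m : ℝ) * π) := by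
        field_simp
      rw [hεdef]
      rw [h4] at h3
      linarith [heps]
    rw [norm_sub_rev]
    calc ‖(‖wguLp k h η m‖⁻¹ • wguLp k h η m) - (‖wgcLp H h η m‖⁻¹ • wgcLp H h η m)‖
        ≤ 2 * (Real.sqrt H * ε) / Real.sqrt (H / 2) := hstep
      _ = 2 * Real.sqrt 2 * ε := hstep2
      _ ≤ 2 * Real.sqrt 2 * (2 * μ0 * H / ((m : ℝ) * π)) := by
          apply mul_le_mul_of_nonneg_left hεbound (by positivity)
      _ = Cc / m := by
          rw [hCc]
          field_simp
          ring
  -- tail bound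
  obtain ⟨hsumm, htsum⟩ := wg_tail_bound Cc N hN1
  have hcastb : ∀ j : ℕ, (fun m : ℕ => Cc / (m : ℝ)) (j + (N + 1))
      = Cc / ((j : ℝ) + N + 1) := by
    intro j
    push_cast
    ring_nf
  have hbs : Summable (fun j : ℕ => ((fun m : ℕ => Cc / (m : ℝ)) (j + (N + 1))) ^ 2) := by
    apply Summable.congr hsumm
    intro j
    rw [hcastb j]
  have hb1 : ∑' j : ℕ, ((fun m : ℕ => Cc / (m : ℝ)) (j + (N + 1))) ^ 2 < 1 := by
    have he1 : ∑' j : ℕ, ((fun m : ℕ => Cc / (m : ℝ)) (j + (N + 1))) ^ 2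
        = ∑' j : ℕ, (Cc / ((j : ℝ) + N + 1)) ^ 2 := by
      apply tsum_congr
      intro j
      rw [hcastb j]
    rw [he1]
    have hNR : (0:ℝ) < N := by exact_mod_cast hN1
    have hCN : Cc ^ 2 < N := by
      have := Nat.lt_floor_add_one (Cc ^ 2)
      have hcast : ((⌊Cc ^ 2⌋₊ + 1 : ℕ) : ℝ) = (⌊Cc ^ 2⌋₊ : ℝ) + 1 := by push_cast; ring
      rw [hN]
      push_cast
      linarith
    calc ∑' j : ℕ, (Cc / ((j : ℝ) + N + 1)) ^ 2 ≤ Cc ^ 2 / N := htsum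
      _ < 1 := by
          rw [div_lt_one hNR]
          exact hCN
  -- the Bari criterion
  have hφdense := bari_lemma (v := fun m => ‖wgcLp H h η m‖⁻¹ • wgcLp H h η m)
    (hv := honC) (hdense := hdenseC)
    (φ := fun m => ‖wguLp k h η m‖⁻¹ • wguLp k h η m) (hφ := honU)
    (N := N) (b := fun m : ℕ => Cc / (m : ℝ)) hclose hbs hb1
  -- transfer to the eigenfunction set
  set S : Set (Lp ℝ 2 (volume.restrict (Set.Ioo (-h) η))) :=
    {f | ∃ n : ℕ, (f : ℝ → ℝ) =ᵐ[volume.restrict (Set.Ioo (-h) η)] Z n} with hS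
  have huS : ∀ m : ℕ, wguLp k h η m ∈ Submodule.span ℝ S := by
    intro m
    match m with
    | 0 =>
      have ha : Real.cosh (k 0 * H) ≠ 0 := ne_of_gt (Real.cosh_pos _)
      have hgmem : (Real.cosh (k 0 * H))⁻¹ • wguLp k h η 0 ∈ S := by
        refine ⟨0, ?_⟩
        have h1 := MeasureTheory.Lp.coeFn_smul ((Real.cosh (k 0 * H))⁻¹)
          (wguLp k h η 0)
        filter_upwards [h1, wguLp_coeFn k h η 0] with z hz1 hz2
        rw [hz1]
        simp only [Pi.smul_apply, smul_eq_mul]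
        rw [hz2, hZ0 z]
        rw [wgu_zero]
        field_simp
      have hid : wguLp k h η 0
          = (Real.cosh (k 0 * H)) • ((Real.cosh (k 0 * H))⁻¹ • wguLp k h η 0) :=
        (smul_inv_smul₀ ha _).symm
      rw [hid]
      exact Submodule.smul_mem _ _ (Submodule.subset_span hgmem)
    | (i+1) =>
      obtain ⟨_, _, _, hcos, _, _⟩ := hfacts (i+1) (by omega)
      have hgmem : (Real.cos (k (i+1) * H))⁻¹ • wguLp k h η (i+1) ∈ S := by
        refine ⟨i+1, ?_⟩
        have h1 := MeasureTheory.Lp.coeFn_smul ((Real.cos (k (i+1) * H))⁻¹)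
          (wguLp k h η (i+1))
        filter_upwards [h1, wguLp_coeFn k h η (i+1)] with z hz1 hz2
        rw [hz1]
        simp only [Pi.smul_apply, smul_eq_mul]
        rw [hz2, hZn (i+1) (by omega) z]
        rw [wgu_succ]
        field_simp
      have hid : wguLp k h η (i+1)
          = (Real.cos (k (i+1) * H)) • ((Real.cos (k (i+1) * H))⁻¹ • wguLp k h η (i+1)) :=
        (smul_inv_smul₀ hcos _).symm
      rw [hid]
      exact Submodule.smul_mem _ _ (Submodule.subset_span hgmem)
  have hsub : Submodule.span ℝ
      (Set.range (fun m => ‖wguLp k h η m‖⁻¹ • wguLp k h η m)) ≤ Submodule.span ℝ S := by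
    rw [Submodule.span_le]
    rintro x ⟨m, rfl⟩
    exact Submodule.smul_mem _ _ (huS m)
  have hfinal : (Submodule.span ℝ S).topologicalClosure = ⊤ := by
    apply le_antisymm le_top
    calc (⊤ : Submodule ℝ (Lp ℝ 2 (volume.restrict (Set.Ioo (-h) η))))
        = (Submodule.span ℝ
            (Set.range (fun m => ‖wguLp k h η m‖⁻¹ • wguLp k h η m))).topologicalClosure := 
          hφdense.symm
      _ ≤ (Submodule.span ℝ S).topologicalClosure := Submodule.topologicalClosure_mono hsub
  exact Submodule.dense_iff_topologicalClosure_eq_top.mpr hfinal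
end

section
/- Fix real constants μ0 > 0 and H > 0, and real numbers h, η with η + h = H. Let Φ* : [−h, η] → ℝ be twice continuously differentiable and satisfy the homogeneous boundary conditions (Φ*)'(η) − μ0·Φ*(η) = 0 and (Φ*)'(−h) = 0. For n ≥ 1 define φ_n = (∫_{−h}^{η} Z_n² dz)^{−1} · ∫_{−h}^{η} Φ*(z)·Z_n(z) dz. Then for every n ≥ 1 one has the exact representation φ_n = −k_n^{−2}·(∫_{−h}^{η} Z_n² dz)^{−1} · ∫_{−h}^{η} (Φ*)''(z)·Z_n(z) dz, and there exists a constant A₂ (independent of n) such that |φ_n| ≤ A₂·n^{−2} for all n ≥ 1. -/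
open Real MeasureTheory intervalIntegral

set_option maxHeartbeats 1000000

/-- Assertion (ii) of Theorem 1 (with Eq. (2.15)): for a C² field `Φ*` satisfying the
same boundary conditions as the eigenfunctions, the modal amplitudes satisfy
`φₙ = −kₙ⁻² ‖Zₙ‖⁻² ∫ (Φ*)'' Zₙ` and decay as `O(n⁻²)`. -/
theorem modal_amplitude_decay_n2
    (μ0 H h η : ℝ) (hμ0 : 0 < μ0) (hH : 0 < H) (hηh : η + h = H)
    (k : ℕ → ℝ)
    (hk : ∀ n : ℕ, 1 ≤ n →
      k n ∈ Set.Ioo ((2 * (n : ℝ) - 1) * π / (2 * H)) ((n : ℝ) * π / H) ∧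
      μ0 + k n * Real.tan (k n * H) = 0)
    (Z : ℕ → ℝ → ℝ)
    (hZn : ∀ n : ℕ, 1 ≤ n → ∀ z, Z n z = Real.cos (k n * (z + h)) / Real.cos (k n * H))
    -- Φ* is twice continuously differentiable on [−h, η], with derivatives Φd, Φdd
    (Φs Φd Φdd : ℝ → ℝ)
    (hΦd : ∀ z ∈ Set.Icc (-h) η, HasDerivWithinAt Φs (Φd z) (Set.Icc (-h) η) z)
    (hΦdd : ∀ z ∈ Set.Icc (-h) η, HasDerivWithinAt Φd (Φdd z) (Set.Icc (-h) η) z)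
    (hΦddc : ContinuousOn Φdd (Set.Icc (-h) η))
    -- homogeneous boundary conditions
    (hbc1 : Φd η - μ0 * Φs η = 0)
    (hbc2 : Φd (-h) = 0)
    (φ : ℕ → ℝ)
    (hφ : ∀ n : ℕ, 1 ≤ n → φ n =
      (∫ z in (-h)..η, (Z n z) ^ 2)⁻¹ * ∫ z in (-h)..η, Φs z * Z n z) :
    (∀ n : ℕ, 1 ≤ n → φ n =
      -((k n) ^ 2)⁻¹ * (∫ z in (-h)..η, (Z n z) ^ 2)⁻¹ *
        ∫ z in (-h)..η, Φdd z * Z n z) ∧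
    ∃ A2 : ℝ, ∀ n : ℕ, 1 ≤ n → |φ n| ≤ A2 / (n : ℝ) ^ 2 := by
  have hπ := Real.pi_pos
  have hhη : -h ≤ η := by linarith
  have hhη' : -h < η := by linarith
  -- basic facts about k n
  have facts : ∀ n : ℕ, 1 ≤ n →
      (n : ℝ) * π / (2 * H) ≤ k n ∧ 0 < k n ∧ Real.cos (k n * H) ≠ 0 ∧
      k n * Real.tan (k n * H) = -μ0 := by
    intro n hn
    obtain ⟨⟨hlo, _⟩, heq⟩ := hk n hn
    have hn1 : (1 : ℝ) ≤ (n : ℝ) := by exact_mod_cast hn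
    have h1 : (n : ℝ) * π / (2 * H) ≤ (2 * (n : ℝ) - 1) * π / (2 * H) := by
      apply div_le_div_of_nonneg_right ?_ (by positivity)
      nlinarith
    have hKle : (n : ℝ) * π / (2 * H) ≤ k n := le_of_lt (lt_of_le_of_lt h1 hlo)
    have hKpos : 0 < k n := lt_of_lt_of_le (by positivity) hKle
    have hcos : Real.cos (k n * H) ≠ 0 := by
      intro h0
      rw [Real.tan_eq_sin_div_cos, h0, div_zero, mul_zero] at heq
      linarith
    exact ⟨hKle, hKpos, hcos, by linarith⟩
  -- continuity of Φs, Φd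
  have hΦsc : ContinuousOn Φs (Set.Icc (-h) η) := fun z hz => (hΦd z hz).continuousWithinAt
  have hΦdc : ContinuousOn Φd (Set.Icc (-h) η) := fun z hz => (hΦdd z hz).continuousWithinAt
  -- integration by parts identity
  have ibp : ∀ n : ℕ, 1 ≤ n →
      ∫ z in (-h)..η, Φs z * Z n z = -((k n) ^ 2)⁻¹ * ∫ z in (-h)..η, Φdd z * Z n z := by
    intro n hn
    obtain ⟨hKle, hKpos, hc, hKtan⟩ := facts n hn
    set K := k n with hK
    set c := Real.cos (K * H) with hcdef
    have hsinD : ∀ z : ℝ, HasDerivAt (fun z => Real.sin (K * (z + h)))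
        (K * Real.cos (K * (z + h))) z := by
      intro z
      have hlin : HasDerivAt (fun z : ℝ => K * (z + h)) K z := by
        simpa using ((hasDerivAt_id z).add_const h).const_mul K
      refine ((Real.hasDerivAt_sin (K * (z + h))).comp z hlin).congr_deriv ?_
      ring
    have hcosD : ∀ z : ℝ, HasDerivAt (fun z => Real.cos (K * (z + h)))
        (-(K * Real.sin (K * (z + h)))) z := by
      intro z
      have hlin : HasDerivAt (fun z : ℝ => K * (z + h)) K z := by
        simpa using ((hasDerivAt_id z).add_const h).const_mul K
      have := (Real.hasDerivAt_cos (K * (z + h))).comp z hlin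
      refine this.congr_deriv ?_
      ring
    set F : ℝ → ℝ := fun z =>
      Φs z * (-K * Real.sin (K * (z + h)) / c) - Φd z * (Real.cos (K * (z + h)) / c) with hF
    have hFderiv : ∀ z ∈ Set.Icc (-h) η,
        HasDerivWithinAt F (-(K ^ 2) * (Φs z * Z n z) - Φdd z * Z n z) (Set.Icc (-h) η) z := by
      intro z hz
      have hT1 : HasDerivWithinAt (fun z => Φs z * (-K * Real.sin (K * (z + h)) / c))
          (Φd z * (-K * Real.sin (K * (z + h)) / c) +
            Φs z * (-K * (K * Real.cos (K * (z + h))) / c)) (Set.Icc (-h) η) z :=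
        (hΦd z hz).mul (((hsinD z).const_mul (-K)).div_const c).hasDerivWithinAt
      have hT2 : HasDerivWithinAt (fun z => Φd z * (Real.cos (K * (z + h)) / c))
          (Φdd z * (Real.cos (K * (z + h)) / c) +
            Φd z * (-(K * Real.sin (K * (z + h))) / c)) (Set.Icc (-h) η) z :=
        (hΦdd z hz).mul (((hcosD z).div_const c).hasDerivWithinAt)
      have := hT1.sub hT2
      refine this.congr_deriv ?_
      rw [hZn n hn z, ← hK, ← hcdef]
      field_simp
      ring
    have hZcont : ContinuousOn (Z n) (Set.Icc (-h) η) := by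
      have hze : Z n = fun z => Real.cos (K * (z + h)) / c := funext (hZn n hn)
      rw [hze]
      exact (Continuous.div_const (by fun_prop) c).continuousOn
    have hint : IntervalIntegrable (fun z => -(K ^ 2) * (Φs z * Z n z) - Φdd z * Z n z)
        volume (-h) η := by
      apply ContinuousOn.intervalIntegrable
      rw [Set.uIcc_of_le hhη]
      exact (continuousOn_const.mul (hΦsc.mul hZcont)).sub (hΦddc.mul hZcont)
    have hFc : ContinuousOn F (Set.Icc (-h) η) := by
      apply ContinuousOn.sub
      · exact hΦsc.mul (Continuous.continuousOn (by fun_prop))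
      · exact hΦdc.mul (Continuous.continuousOn (by fun_prop))
    have key := integral_eq_sub_of_hasDeriv_right_of_le hhη hFc
      (fun x hx => ((hFderiv x (Set.Ioo_subset_Icc_self hx)).hasDerivAt
        (Icc_mem_nhds hx.1 hx.2)).hasDerivWithinAt) hint
    have hFnh : F (-h) = 0 := by
      show Φs (-h) * (-K * Real.sin (K * (-h + h)) / c) -
        Φd (-h) * (Real.cos (K * (-h + h)) / c) = 0
      rw [show K * (-h + h) = 0 by ring]
      simp [hbc2]
    have hFη : F η = 0 := by
      show Φs η * (-K * Real.sin (K * (η + h)) / c) -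
        Φd η * (Real.cos (K * (η + h)) / c) = 0
      rw [hηh]
      have hs : Real.sin (K * H) = Real.tan (K * H) * c := by
        rw [Real.tan_eq_sin_div_cos, hcdef, div_mul_cancel₀ _ (by rwa [hcdef] at hc)]
      have hd : Φd η = μ0 * Φs η := by linarith
      rw [hs]
      have e1 : -K * (Real.tan (K * H) * c) / c = μ0 := by
        rw [mul_div_assoc, mul_div_cancel_right₀ _ hc]
        linear_combination -1 * hKtan
      have e2 : c / c = 1 := div_self hc
      rw [e1, e2]
      linarith
    rw [hFη, hFnh, sub_zero] at key
    have hint1 : IntervalIntegrable (fun z => Φs z * Z n z) volume (-h) η := by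
      apply ContinuousOn.intervalIntegrable
      rw [Set.uIcc_of_le hhη]
      exact hΦsc.mul hZcont
    have hint2 : IntervalIntegrable (fun z => Φdd z * Z n z) volume (-h) η := by
      apply ContinuousOn.intervalIntegrable
      rw [Set.uIcc_of_le hhη]
      exact hΦddc.mul hZcont
    rw [intervalIntegral.integral_sub (hint1.const_mul _) hint2,
      intervalIntegral.integral_const_mul] at key
    have hK2 : (K : ℝ) ^ 2 ≠ 0 := by positivity
    field_simp
    linarith
  refine ⟨fun n hn => by rw [hφ n hn, ibp n hn]; ring, ?_⟩
  -- the decay estimate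
  obtain ⟨B, hB⟩ := IsCompact.exists_bound_of_continuousOn isCompact_Icc hΦddc
  have hB0 : 0 ≤ B := le_trans (norm_nonneg _) (hB (-h) (Set.left_mem_Icc.mpr hhη))
  set M : ℝ := 1 + 2 * H * μ0 / π with hM
  have hM0 : 0 < M := by positivity
  set c0 : ℝ := H / 2 - H / (2 * π) with hc0def
  have hc0 : 0 < c0 := by
    rw [hc0def, sub_pos, div_lt_div_iff₀ (by positivity) (by norm_num)]
    nlinarith [Real.pi_gt_three]
  -- lower bound for ∫ Z²
  have hZsq : ∀ n : ℕ, 1 ≤ n → c0 ≤ ∫ z in (-h)..η, (Z n z) ^ 2 := by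
    intro n hn
    obtain ⟨hKle, hKpos, hc, hKtan⟩ := facts n hn
    set K := k n with hK
    have hn1 : (1 : ℝ) ≤ (n : ℝ) := by exact_mod_cast hn
    have hKlow : π / (2 * H) ≤ K := by
      refine le_trans ?_ hKle
      rw [div_le_div_iff₀ (by positivity) (by positivity)]
      nlinarith [mul_nonneg (mul_nonneg (sub_nonneg.mpr hn1) hπ.le)
        (by positivity : (0 : ℝ) ≤ 2 * H)]
    have hsinD : ∀ z : ℝ, HasDerivAt (fun z => Real.sin (K * (z + h)))
        (K * Real.cos (K * (z + h))) z := by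
      intro z
      have hlin : HasDerivAt (fun z : ℝ => K * (z + h)) K z := by
        simpa using ((hasDerivAt_id z).add_const h).const_mul K
      refine ((Real.hasDerivAt_sin (K * (z + h))).comp z hlin).congr_deriv ?_
      ring
    have hcosD : ∀ z : ℝ, HasDerivAt (fun z => Real.cos (K * (z + h)))
        (-(K * Real.sin (K * (z + h)))) z := by
      intro z
      have hlin : HasDerivAt (fun z : ℝ => K * (z + h)) K z := by
        simpa using ((hasDerivAt_id z).add_const h).const_mul K
      have := (Real.hasDerivAt_cos (K * (z + h))).comp z hlin
      refine this.congr_deriv ?_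
      ring
    have hGderiv : ∀ z : ℝ, HasDerivAt
        (fun z => z / 2 + Real.sin (K * (z + h)) * Real.cos (K * (z + h)) / (2 * K))
        ((Real.cos (K * (z + h))) ^ 2) z := by
      intro z
      have hid : HasDerivAt (fun z : ℝ => z / 2) ((1 : ℝ) / 2) z := by
        simpa using (hasDerivAt_id z).div_const 2
      have hmul := ((hsinD z).mul (hcosD z)).div_const (2 * K)
      have := hid.add hmul
      refine this.congr_deriv ?_
      have heq : (K * Real.cos (K * (z + h)) * Real.cos (K * (z + h)) +
          Real.sin (K * (z + h)) * -(K * Real.sin (K * (z + h)))) / (2 * K) =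
          ((Real.cos (K * (z + h))) ^ 2 - (Real.sin (K * (z + h))) ^ 2) / 2 := by
        field_simp
        ring
      rw [heq]
      have hsc := Real.sin_sq_add_cos_sq (K * (z + h))
      linarith
    have hcossq : ∫ z in (-h)..η, (Real.cos (K * (z + h))) ^ 2 =
        H / 2 + Real.sin (K * H) * Real.cos (K * H) / (2 * K) := by
      rw [intervalIntegral.integral_eq_sub_of_hasDerivAt (fun x _ => hGderiv x)
        (by apply Continuous.intervalIntegrable; fun_prop)]
      rw [show K * (η + h) = K * H by rw [hηh], show K * (-h + h) = 0 by ring]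
      simp only [Real.sin_zero, zero_mul, zero_div, add_zero]
      have : η / 2 - -h / 2 = H / 2 := by linarith
      linarith
    have hpt : ∀ z ∈ Set.Icc (-h) η, (Real.cos (K * (z + h))) ^ 2 ≤ (Z n z) ^ 2 := by
      intro z _
      have hcpos : 0 < (Real.cos (K * H)) ^ 2 :=
        lt_of_le_of_ne (sq_nonneg _) (Ne.symm (pow_ne_zero 2 hc))
      rw [hZn n hn z, div_pow, le_div_iff₀ hcpos]
      exact mul_le_of_le_one_right (sq_nonneg _) (Real.cos_sq_le_one _)
    have hZcont : ContinuousOn (Z n) (Set.Icc (-h) η) := by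
      have hze : Z n = fun z => Real.cos (K * (z + h)) / Real.cos (K * H) := funext (hZn n hn)
      rw [hze]
      exact (Continuous.div_const (by fun_prop) _).continuousOn
    have hint1 : IntervalIntegrable (fun z => (Real.cos (K * (z + h))) ^ 2) volume (-h) η := by
      apply Continuous.intervalIntegrable; fun_prop
    have hint2 : IntervalIntegrable (fun z => (Z n z) ^ 2) volume (-h) η := by
      apply ContinuousOn.intervalIntegrable
      rw [Set.uIcc_of_le hhη]
      exact hZcont.pow 2
    have hmono := intervalIntegral.integral_mono_on hhη hint1 hint2 hpt
    have hsc : -(1 / 2 : ℝ) ≤ Real.sin (K * H) * Real.cos (K * H) := by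
      nlinarith [Real.sin_sq_add_cos_sq (K * H), sq_nonneg (Real.sin (K * H) + Real.cos (K * H))]
    have hb : -(H / (2 * π)) ≤ Real.sin (K * H) * Real.cos (K * H) / (2 * K) := by
      have h1 : (-(1 / 2) : ℝ) / (2 * K) ≤ Real.sin (K * H) * Real.cos (K * H) / (2 * K) := by
        gcongr
      have h3 : (1 : ℝ) / 2 / (2 * K) ≤ H / (2 * π) := by
        rw [div_div, div_le_div_iff₀ (by positivity) (by positivity)]
        have h4 := (div_le_iff₀ (by positivity : (0 : ℝ) < 2 * H)).mp hKlow
        nlinarith [h4]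
      have h5 : (-(1 / 2) : ℝ) / (2 * K) = -((1 : ℝ) / 2 / (2 * K)) := by ring
      linarith [h1, h3, h5.ge, h5.le]
    calc c0 = H / 2 + -(H / (2 * π)) := by rw [hc0def]; ring
      _ ≤ H / 2 + Real.sin (K * H) * Real.cos (K * H) / (2 * K) := by linarith
      _ = ∫ z in (-h)..η, (Real.cos (K * (z + h))) ^ 2 := hcossq.symm
      _ ≤ ∫ z in (-h)..η, (Z n z) ^ 2 := hmono
  -- uniform bound for |Z n z|
  have hZbd : ∀ n : ℕ, 1 ≤ n → ∀ z : ℝ, |Z n z| ≤ M := by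
    intro n hn z
    obtain ⟨hKle, hKpos, hc, hKtan⟩ := facts n hn
    set K := k n with hK
    have hn1 : (1 : ℝ) ≤ (n : ℝ) := by exact_mod_cast hn
    have hKlow : π / (2 * H) ≤ K := by
      refine le_trans ?_ hKle
      rw [div_le_div_iff₀ (by positivity) (by positivity)]
      nlinarith [mul_nonneg (mul_nonneg (sub_nonneg.mpr hn1) hπ.le)
        (by positivity : (0 : ℝ) ≤ 2 * H)]
    have htan : Real.tan (K * H) = -μ0 / K := by
      field_simp
      linarith
    have hinv : (Real.cos (K * H)) ^ 2 * (1 + (μ0 / K) ^ 2) = 1 := by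
      have h1 := Real.inv_one_add_tan_sq hc
      rw [htan] at h1
      rw [← h1, neg_div, neg_sq, inv_mul_cancel₀ (by positivity)]
    have hμK : μ0 / K ≤ 2 * H * μ0 / π := by
      rw [div_le_div_iff₀ hKpos hπ]
      have h4 := (div_le_iff₀ (by positivity : (0 : ℝ) < 2 * H)).mp hKlow
      nlinarith
    have ha : 0 ≤ μ0 / K := div_nonneg hμ0.le hKpos.le
    have ht2 : 1 ≤ (|Real.cos (K * H)| * (1 + μ0 / K)) ^ 2 := by
      nlinarith [hinv, sq_abs (Real.cos (K * H)),
        mul_nonneg (sq_nonneg (Real.cos (K * H))) ha, ha]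
    have habs : 1 ≤ |Real.cos (K * H)| * (1 + μ0 / K) := by
      nlinarith [ht2, mul_nonneg (abs_nonneg (Real.cos (K * H)))
        (by linarith : (0 : ℝ) ≤ 1 + μ0 / K)]
    have hMge : 1 + μ0 / K ≤ M := by rw [hM]; linarith
    have h1M : 1 ≤ M * |Real.cos (K * H)| := by
      rw [mul_comm]
      exact le_trans habs (mul_le_mul_of_nonneg_left hMge (abs_nonneg _))
    rw [hZn n hn z, abs_div, div_le_iff₀ (abs_pos.mpr hc)]
    calc |Real.cos (K * (z + h))| ≤ 1 := Real.abs_cos_le_one _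
      _ ≤ M * |Real.cos (K * H)| := h1M
  -- assemble
  refine ⟨4 * H ^ 2 / π ^ 2 * c0⁻¹ * (B * M * H), ?_⟩
  intro n hn
  obtain ⟨hKle, hKpos, hc, hKtan⟩ := facts n hn
  set K := k n with hK
  have hn1 : (1 : ℝ) ≤ (n : ℝ) := by exact_mod_cast hn
  set I := ∫ z in (-h)..η, (Z n z) ^ 2 with hI
  have hIc : c0 ≤ I := hZsq n hn
  have hI0 : 0 < I := lt_of_lt_of_le hc0 hIc
  have hφn : φ n = -(K ^ 2)⁻¹ * I⁻¹ * ∫ z in (-h)..η, Φdd z * Z n z := by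
    rw [hφ n hn, ibp n hn]; ring
  have hintbd : |∫ z in (-h)..η, Φdd z * Z n z| ≤ B * M * H := by
    have hbd := intervalIntegral.norm_integral_le_of_norm_le_const
      (C := B * M) (f := fun z => Φdd z * Z n z) (a := -h) (b := η) ?_
    · rw [Real.norm_eq_abs] at hbd
      have habs : |η - -h| = H := by
        rw [abs_of_pos (by linarith)]; linarith
      rw [habs] at hbd
      linarith
    · intro x hx
      have hx' : x ∈ Set.Icc (-h) η := by
        rw [Set.uIoc_of_le hhη] at hx
        exact Set.Ioc_subset_Icc_self hx
      rw [Real.norm_eq_abs, abs_mul]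
      have h6 := hB x hx'
      rw [Real.norm_eq_abs] at h6
      exact mul_le_mul h6 (hZbd n hn x) (abs_nonneg _) hB0
  have hK2 : ((n : ℝ) * π / (2 * H)) ^ 2 ≤ K ^ 2 := by
    apply pow_le_pow_left₀ (by positivity) hKle
  have hKinv : (K ^ 2)⁻¹ ≤ 4 * H ^ 2 / π ^ 2 / (n : ℝ) ^ 2 := by
    have heq : 4 * H ^ 2 / π ^ 2 / (n : ℝ) ^ 2 = (((n : ℝ) * π / (2 * H)) ^ 2)⁻¹ := by
      rw [div_pow, mul_pow]
      field_simp
      ring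
    rw [heq]
    exact inv_anti₀ (by positivity) hK2
  have hIinv : I⁻¹ ≤ c0⁻¹ := inv_anti₀ hc0 hIc
  calc |φ n| = (K ^ 2)⁻¹ * I⁻¹ * |∫ z in (-h)..η, Φdd z * Z n z| := by
        rw [hφn, abs_mul, abs_mul, abs_neg, abs_inv, abs_inv,
          abs_of_pos (by positivity : (0 : ℝ) < K ^ 2), abs_of_pos hI0]
    _ ≤ 4 * H ^ 2 / π ^ 2 / (n : ℝ) ^ 2 * c0⁻¹ * (B * M * H) := by
        exact mul_le_mul (mul_le_mul hKinv hIinv (by positivity) (by positivity))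
          hintbd (abs_nonneg _) (by positivity)
    _ = 4 * H ^ 2 / π ^ 2 * c0⁻¹ * (B * M * H) / (n : ℝ) ^ 2 := by ring
end

section
/- Fix a real constant μ0 > 0 and an integer n ≥ 1, and for H > 0 let k_n(H) be the unique solution k of μ0 + k·tan(k·H) = 0 in ((2n−1)π/(2H), nπ/H). Then the function H ↦ k_n(H) is differentiable on (0, ∞), the quantity −μ0 + H·(k_n(H)² + μ0²) is strictly positive, and d k_n/dH = −k_n·(k_n² + μ0²) / (−μ0 + H·(k_n² + μ0²)). -/
open Real

section Aux

variable (μ0 : ℝ) (n : ℕ)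

/-- The inverse profile `H = φ(k)` on the n-th branch. -/
noncomputable def eigPhi (x : ℝ) : ℝ := ((n : ℝ) * π - arctan (μ0 / x)) / x

/-- Its derivative. -/
noncomputable def eigPhiD (x : ℝ) : ℝ :=
  (μ0 * x / (x ^ 2 + μ0 ^ 2) - ((n : ℝ) * π - arctan (μ0 / x))) / x ^ 2

theorem eigPhi_hasDerivAt (hμ0 : 0 < μ0) {x : ℝ} (hx : 0 < x) :
    HasDerivAt (eigPhi μ0 n) (eigPhiD μ0 n x) x := by
  have h1 : HasDerivAt (fun y : ℝ => μ0 / y) (μ0 * -(x ^ 2)⁻¹) x := by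
    simpa [div_eq_mul_inv] using (hasDerivAt_inv hx.ne').const_mul μ0
  have h2 : HasDerivAt (fun y : ℝ => arctan (μ0 / y))
      (1 / (1 + (μ0 / x) ^ 2) * (μ0 * -(x ^ 2)⁻¹)) x := h1.arctan
  have h3 := ((hasDerivAt_const x ((n : ℝ) * π)).sub h2).div (hasDerivAt_id x) hx.ne'
  refine h3.congr_deriv ?_
  have hx2 : (0:ℝ) < x ^ 2 + μ0 ^ 2 := by positivity
  unfold eigPhiD
  simp only [id, Pi.sub_apply]
  field_simp
  ring
end Aux

/-- Proposition 1, Eq. (3.4): the eigenvalue branch `H ↦ kₙ(H)` is differentiable on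
`(0, ∞)`, the denominator `−μ₀ + H(kₙ² + μ₀²)` is strictly positive, and
`dkₙ/dH = −kₙ(kₙ² + μ₀²)/(−μ₀ + H(kₙ² + μ₀²))`. -/
theorem eigenvalue_first_derivative (μ0 : ℝ) (hμ0 : 0 < μ0) (n : ℕ) (hn : 1 ≤ n)
    (k : ℝ → ℝ)
    (hk : ∀ H : ℝ, 0 < H →
      k H ∈ Set.Ioo ((2 * (n : ℝ) - 1) * π / (2 * H)) ((n : ℝ) * π / H) ∧
      μ0 + k H * Real.tan (k H * H) = 0) :
    DifferentiableOn ℝ k (Set.Ioi 0) ∧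
    ∀ H : ℝ, 0 < H →
      0 < -μ0 + H * ((k H) ^ 2 + μ0 ^ 2) ∧
      HasDerivAt k (-(k H * ((k H) ^ 2 + μ0 ^ 2)) / (-μ0 + H * ((k H) ^ 2 + μ0 ^ 2))) H := by
  have hn1 : (1 : ℝ) ≤ (n : ℝ) := by exact_mod_cast hn
  have hpi2 : (0:ℝ) < π / 2 := by positivity
  -- ψ lower bound
  have hpsi : ∀ x : ℝ, π / 2 ≤ (n : ℝ) * π - arctan (μ0 / x) := by
    intro x
    have h1 : arctan (μ0 / x) < π / 2 := arctan_lt_pi_div_two _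
    have h2 : π ≤ (n : ℝ) * π := le_mul_of_one_le_left pi_pos.le hn1
    linarith
  -- key identity: φ (k H) = H and k H > 0
  have key : ∀ H : ℝ, 0 < H → 0 < k H ∧ eigPhi μ0 n (k H) = H := by
    intro H hH
    obtain ⟨⟨h1, h2⟩, heq⟩ := hk H hH
    have hlb : 0 < (2 * (n : ℝ) - 1) * π / (2 * H) := by
      apply div_pos (mul_pos (by linarith) pi_pos) (by linarith)
    have hk0 : 0 < k H := lt_trans hlb h1
    have hx1 : (2 * (n : ℝ) - 1) * π / 2 < k H * H := by
      rw [div_lt_iff₀ (by linarith : (0:ℝ) < 2 * H)] at h1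
      nlinarith [h1]
    have hx2 : k H * H < (n : ℝ) * π := by
      rw [lt_div_iff₀ hH] at h2; exact h2
    have htan : Real.tan (k H * H) = -μ0 / k H := by
      field_simp
      linarith [heq]
    -- arctan step
    have hsub1 : -(π / 2) < k H * H - (n : ℝ) * π := by linarith
    have hsub2 : k H * H - (n : ℝ) * π < π / 2 := by linarith
    have htan2 : Real.tan (k H * H - (n : ℝ) * π) = -μ0 / k H := by
      rw [Real.tan_periodic.sub_nat_mul_eq n, htan]
    have harc : arctan (-μ0 / k H) = k H * H - (n : ℝ) * π := by
      rw [← htan2, arctan_tan hsub1 hsub2]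
    have harc2 : arctan (μ0 / k H) = (n : ℝ) * π - k H * H := by
      have : arctan (-(μ0 / k H)) = k H * H - (n : ℝ) * π := by
        rwa [neg_div] at harc
      rw [arctan_neg] at this
      linarith
    refine ⟨hk0, ?_⟩
    unfold eigPhi
    rw [harc2]
    field_simp
    ring
  -- derivative negativity
  have hD : ∀ x : ℝ, 0 < x → eigPhiD μ0 n x < 0 := by
    intro x hx
    unfold eigPhiD
    apply div_neg_of_neg_of_pos _ (by positivity)
    have h1 := hpsi x
    have h2 : μ0 * x / (x ^ 2 + μ0 ^ 2) ≤ 1 / 2 := by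
      rw [div_le_iff₀ (by positivity)]
      nlinarith [sq_nonneg (x - μ0)]
    have h3 : (1:ℝ)/2 < π/2 := by nlinarith [pi_gt_three]
    linarith
  -- strict derivative of φ
  have hstrict : ∀ x : ℝ, 0 < x → HasStrictDerivAt (eigPhi μ0 n) (eigPhiD μ0 n x) x := by
    intro x hx
    have hc : ContDiffAt ℝ 1 (eigPhi μ0 n) x := by
      apply ContDiffAt.div _ contDiffAt_id hx.ne'
      exact contDiffAt_const.sub (Real.contDiff_arctan.contDiffAt.comp x
        (contDiffAt_const.div contDiffAt_id hx.ne'))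
    have := hc.hasStrictDerivAt one_ne_zero
    rwa [(eigPhi_hasDerivAt μ0 n hμ0 hx).deriv] at this
  -- φ strictly anti on Ioi 0
  have hanti : StrictAntiOn (eigPhi μ0 n) (Set.Ioi 0) := by
    apply strictAntiOn_of_deriv_neg (convex_Ioi 0)
    · intro x hx
      exact ((eigPhi_hasDerivAt μ0 n hμ0 hx).continuousAt).continuousWithinAt
    · intro x hx
      rw [interior_Ioi] at hx
      rw [(eigPhi_hasDerivAt μ0 n hμ0 hx).deriv]
      exact hD x hx
  -- main derivative statement
  have main : ∀ H : ℝ, 0 < H → HasDerivAt k ((eigPhiD μ0 n (k H))⁻¹) H := by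
    intro H hH
    obtain ⟨hk0, hφ⟩ := key H hH
    have hev : ∀ᶠ x in nhds (k H), k (eigPhi μ0 n x) = x := by
      have e1 : ∀ᶠ x in nhds (k H), 0 < x := eventually_gt_nhds hk0
      have e2 : ∀ᶠ x in nhds (k H), 0 < eigPhi μ0 n x := by
        have hc := (eigPhi_hasDerivAt μ0 n hμ0 hk0).continuousAt
        have : eigPhi μ0 n (k H) > 0 := by rw [hφ]; exact hH
        exact hc.eventually (eventually_gt_nhds this)
      filter_upwards [e1, e2] with x hx hφx
      obtain ⟨hkx, hφkx⟩ := key _ hφx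
      exact hanti.injOn (Set.mem_Ioi.2 hkx) (Set.mem_Ioi.2 hx) hφkx
    have h := (hstrict _ hk0).to_local_left_inverse (hD _ hk0).ne hev
    rw [hφ] at h
    exact h.hasDerivAt
  refine ⟨fun H hH => (main H hH).differentiableAt.differentiableWithinAt, ?_⟩
  intro H hH
  obtain ⟨hk0, hφ⟩ := key H hH
  have hψ : (n : ℝ) * π - arctan (μ0 / k H) = H * k H := by
    have : ((n : ℝ) * π - arctan (μ0 / k H)) / k H = H := hφ
    field_simp at this
    linarith
  have hpos : 0 < -μ0 + H * ((k H) ^ 2 + μ0 ^ 2) := by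
    have h1 : π / 2 ≤ H * k H := hψ ▸ hpsi (k H)
    nlinarith [sq_nonneg (k H - μ0), pi_gt_three, mul_pos hk0 hμ0]
  refine ⟨hpos, ?_⟩
  have hDval : eigPhiD μ0 n (k H) = (μ0 - H * ((k H) ^ 2 + μ0 ^ 2)) / (k H * ((k H) ^ 2 + μ0 ^ 2)) := by
    unfold eigPhiD
    rw [hψ]
    have hA : (0:ℝ) < (k H) ^ 2 + μ0 ^ 2 := by positivity
    field_simp
  have hfin := main H hH
  rw [hDval] at hfin
  convert hfin using 1
  rw [inv_div, ← neg_div_neg_eq]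
  ring_nf
end

section
/- Fix a real constant μ0 > 0 and an integer n ≥ 1, and for H > 0 let k_n(H) be the unique solution k of μ0 + k·tan(k·H) = 0 in ((2n−1)π/(2H), nπ/H). Then H ↦ k_n(H) is twice differentiable on (0, ∞) and its second derivative satisfies d²k_n/dH² = −2·(dk_n/dH)·{ μ0 + ((dk_n/dH)/k_n)·(H·μ0 − 1)·(2 + H·(dk_n/dH)/k_n) }. -/
open Real

noncomputable def gfun (μ0 : ℝ) (n : ℕ) (x : ℝ) : ℝ := ((n : ℝ) * π - arctan (μ0 / x)) / x

noncomputable def gder (μ0 : ℝ) (n : ℕ) (x : ℝ) : ℝ :=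
  (μ0 * x / (x ^ 2 + μ0 ^ 2) - ((n : ℝ) * π - arctan (μ0 / x))) / x ^ 2

lemma gfun_hasDerivAt (μ0 : ℝ) (n : ℕ) {x : ℝ} (hx : 0 < x) :
    HasDerivAt (gfun μ0 n) (gder μ0 n x) x := by
  have hx0 : x ≠ 0 := ne_of_gt hx
  have h1 : HasDerivAt (fun x : ℝ => μ0 / x) (μ0 * (-(x ^ 2)⁻¹)) x := by
    simpa [div_eq_mul_inv, mul_comm] using (hasDerivAt_inv hx0).const_mul μ0
  have h2 : HasDerivAt (fun x : ℝ => arctan (μ0 / x))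
      (1 / (1 + (μ0 / x) ^ 2) * (μ0 * (-(x ^ 2)⁻¹))) x :=
    (Real.hasDerivAt_arctan (μ0 / x)).comp x h1
  have h3 : HasDerivAt (fun x : ℝ => (n : ℝ) * π - arctan (μ0 / x))
      (-(1 / (1 + (μ0 / x) ^ 2) * (μ0 * (-(x ^ 2)⁻¹)))) x := h2.const_sub _
  have h4 := h3.div (hasDerivAt_id x) hx0
  have hne : (1 : ℝ) + (μ0 / x) ^ 2 ≠ 0 := by positivity
  refine h4.congr_deriv ?_
  unfold gder
  simp only [id]
  field_simp

lemma gder_neg {μ0 : ℝ} (hμ0 : 0 < μ0) {n : ℕ} (hn : 1 ≤ n) {x : ℝ} (hx : 0 < x) :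
    gder μ0 n x < 0 := by
  apply div_neg_of_neg_of_pos _ (by positivity)
  have h1 : μ0 * x / (x ^ 2 + μ0 ^ 2) ≤ 1 / 2 := by
    rw [div_le_iff₀ (by positivity)]
    nlinarith [sq_nonneg (x - μ0)]
  have h2 : arctan (μ0 / x) < π / 2 := Real.arctan_lt_pi_div_two _
  have h3 : (1 : ℝ) * π ≤ (n : ℝ) * π := by
    have : (1 : ℝ) ≤ (n : ℝ) := by exact_mod_cast hn
    nlinarith [Real.pi_pos]
  have := Real.pi_gt_three
  linarith

lemma gfun_strictAnti {μ0 : ℝ} (hμ0 : 0 < μ0) {n : ℕ} (hn : 1 ≤ n) :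
    StrictAntiOn (gfun μ0 n) (Set.Ioi 0) := by
  apply strictAntiOn_of_deriv_neg (convex_Ioi 0)
  · exact fun x hx => (gfun_hasDerivAt μ0 n hx).continuousAt.continuousWithinAt
  · intro x hx
    rw [interior_Ioi] at hx
    rw [(gfun_hasDerivAt μ0 n hx).deriv]
    exact gder_neg hμ0 hn hx

/-- Proposition 1, Eq. (3.5): the eigenvalue branch `H ↦ kₙ(H)` is twice differentiable
on `(0, ∞)` and
`d²kₙ/dH² = −2(dkₙ/dH)·{μ₀ + ((dkₙ/dH)/kₙ)(Hμ₀ − 1)(2 + H(dkₙ/dH)/kₙ)}`. -/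
theorem eigenvalue_second_derivative (μ0 : ℝ) (hμ0 : 0 < μ0) (n : ℕ) (hn : 1 ≤ n)
    (k : ℝ → ℝ)
    (hk : ∀ H : ℝ, 0 < H →
      k H ∈ Set.Ioo ((2 * (n : ℝ) - 1) * π / (2 * H)) ((n : ℝ) * π / H) ∧
      μ0 + k H * Real.tan (k H * H) = 0) :
    ∀ H : ℝ, 0 < H →
      HasDerivAt k (deriv k H) H ∧
      HasDerivAt (deriv k)
        (-2 * deriv k H *
          (μ0 + (deriv k H / k H) * (H * μ0 - 1) * (2 + H * (deriv k H / k H)))) H := by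
  have hπ := Real.pi_pos
  have hn1 : (1 : ℝ) ≤ (n : ℝ) := by exact_mod_cast hn
  have kpos : ∀ H : ℝ, 0 < H → 0 < k H := by
    intro H hH
    have h1 : 0 < (2 * (n : ℝ) - 1) * π / (2 * H) := by
      apply div_pos (mul_pos (by linarith) hπ) (by linarith)
    exact lt_trans h1 (hk H hH).1.1
  -- lower bound on k H * H
  have hlow : ∀ H : ℝ, 0 < H → (2 * (n : ℝ) - 1) * π / 2 < k H * H := by
    intro H hH
    have hlo := (hk H hH).1.1
    rw [div_lt_iff₀ (by linarith : (0:ℝ) < 2 * H)] at hlo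
    nlinarith
  have hhigh : ∀ H : ℝ, 0 < H → k H * H < (n : ℝ) * π := by
    intro H hH
    have hhi := (hk H hH).1.2
    rw [lt_div_iff₀ hH] at hhi
    exact hhi
  -- the key identity
  have hkey : ∀ H : ℝ, 0 < H → (n : ℝ) * π - arctan (μ0 / k H) = k H * H := by
    intro H hH
    have hk0 := kpos H hH
    have heq := (hk H hH).2
    have ht1 := hlow H hH
    have ht2 := hhigh H hH
    have htan : Real.tan (k H * H) = -μ0 / k H := by
      rw [eq_div_iff hk0.ne']
      linear_combination heq
    have harc : arctan (Real.tan (k H * H - (n : ℝ) * π)) = k H * H - (n : ℝ) * π :=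
      Real.arctan_tan (by linarith) (by linarith)
    have hper : Real.tan (k H * H - (n : ℝ) * π) = Real.tan (k H * H) := by
      simpa using Real.tan_periodic.sub_nat_mul_eq n
    rw [hper, htan, neg_div, Real.arctan_neg] at harc
    linarith
  have hg : ∀ H : ℝ, 0 < H → gfun μ0 n (k H) = H := by
    intro H hH
    have hk0 := kpos H hH
    unfold gfun
    rw [hkey H hH, mul_comm, mul_div_assoc, div_self hk0.ne', mul_one]
  have hanti := gfun_strictAnti hμ0 hn
  -- continuity of k
  have hcont : ∀ H : ℝ, 0 < H → ContinuousAt k H := by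
    intro H₀ h₀
    rw [Metric.continuousAt_iff]
    intro ε hε
    have hk0 := kpos H₀ h₀
    set ε' := min ε (k H₀ / 2) with hε'def
    have hε'pos : 0 < ε' := lt_min hε (by linarith)
    have hε'le : ε' ≤ k H₀ / 2 := min_le_right _ _
    have hε'le' : ε' ≤ ε := min_le_left _ _
    have ha : (0:ℝ) < k H₀ - ε' := by linarith
    have hmema : k H₀ - ε' ∈ Set.Ioi (0:ℝ) := ha
    have hmemb : k H₀ + ε' ∈ Set.Ioi (0:ℝ) := by
      simp only [Set.mem_Ioi]; linarith
    have hmem0 : k H₀ ∈ Set.Ioi (0:ℝ) := hk0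
    have hga : gfun μ0 n (k H₀) < gfun μ0 n (k H₀ - ε') := hanti hmema hmem0 (by linarith)
    have hgb : gfun μ0 n (k H₀ + ε') < gfun μ0 n (k H₀) := hanti hmem0 hmemb (by linarith)
    rw [hg H₀ h₀] at hga hgb
    refine ⟨min (min (gfun μ0 n (k H₀ - ε') - H₀) (H₀ - gfun μ0 n (k H₀ + ε'))) (H₀ / 2),
      lt_min (lt_min (by linarith) (by linarith)) (by linarith), ?_⟩
    intro H hdist
    rw [Real.dist_eq] at hdist
    have habs := abs_lt.mp hdist
    have hd1 : min (min (gfun μ0 n (k H₀ - ε') - H₀) (H₀ - gfun μ0 n (k H₀ + ε'))) (H₀ / 2)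
        ≤ H₀ / 2 := min_le_right _ _
    have hd2 : min (min (gfun μ0 n (k H₀ - ε') - H₀) (H₀ - gfun μ0 n (k H₀ + ε'))) (H₀ / 2)
        ≤ gfun μ0 n (k H₀ - ε') - H₀ := le_trans (min_le_left _ _) (min_le_left _ _)
    have hd3 : min (min (gfun μ0 n (k H₀ - ε') - H₀) (H₀ - gfun μ0 n (k H₀ + ε'))) (H₀ / 2)
        ≤ H₀ - gfun μ0 n (k H₀ + ε') := le_trans (min_le_left _ _) (min_le_right _ _)
    have hHpos : 0 < H := by linarith
    have h1 : gfun μ0 n (k H) < gfun μ0 n (k H₀ - ε') := by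
      rw [hg H hHpos]; linarith
    have h2 : gfun μ0 n (k H₀ + ε') < gfun μ0 n (k H) := by
      rw [hg H hHpos]; linarith
    have hmemH : k H ∈ Set.Ioi (0:ℝ) := kpos H hHpos
    have hlt1 : k H₀ - ε' < k H := (hanti.lt_iff_gt hmemH hmema).mp h1
    have hlt2 : k H < k H₀ + ε' := (hanti.lt_iff_gt hmemb hmemH).mp h2
    rw [Real.dist_eq, abs_lt]
    constructor <;> linarith
  -- negativity of the denominator
  have hMneg : ∀ H : ℝ, 0 < H → μ0 - H * (k H ^ 2 + μ0 ^ 2) < 0 := by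
    intro H hH
    have h1 : 1 < k H * H := by
      have := hlow H hH
      nlinarith [Real.pi_gt_three]
    nlinarith [mul_nonneg hH.le (sq_nonneg (k H - μ0)),
      mul_pos hμ0 (show (0:ℝ) < k H * H - 1 by linarith)]
  -- value of gder at k H
  have hgder : ∀ H : ℝ, 0 < H →
      gder μ0 n (k H) = (μ0 - H * (k H ^ 2 + μ0 ^ 2)) / (k H * (k H ^ 2 + μ0 ^ 2)) := by
    intro H hH
    have hk0 := kpos H hH
    have hAne : k H ^ 2 + μ0 ^ 2 ≠ 0 := by positivity
    unfold gder
    rw [hkey H hH]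
    field_simp
  -- first derivative
  have hder : ∀ H : ℝ, 0 < H → HasDerivAt k ((gder μ0 n (k H))⁻¹) H := by
    intro H hH
    refine HasDerivAt.of_local_left_inverse (hcont H hH) (gfun_hasDerivAt μ0 n (kpos H hH))
      (ne_of_lt (gder_neg hμ0 hn (kpos H hH))) ?_
    filter_upwards [isOpen_Ioi.mem_nhds hH] with y hy using hg y hy
  have hderval : ∀ H : ℝ, 0 < H →
      deriv k H = k H * (k H ^ 2 + μ0 ^ 2) / (μ0 - H * (k H ^ 2 + μ0 ^ 2)) := by
    intro H hH
    rw [(hder H hH).deriv, hgder H hH, inv_div]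
  intro H hH
  constructor
  · rw [(hder H hH).deriv]
    exact hder H hH
  · have heq : deriv k =ᶠ[nhds H]
        (fun t => k t * (k t ^ 2 + μ0 ^ 2) / (μ0 - t * (k t ^ 2 + μ0 ^ 2))) := by
      filter_upwards [isOpen_Ioi.mem_nhds hH] with y hy using hderval y hy
    rw [heq.hasDerivAt_iff]
    have hk' : HasDerivAt k (deriv k H) H := by
      rw [(hder H hH).deriv]; exact hder H hH
    have h2 : HasDerivAt (fun t => k t ^ 2 + μ0 ^ 2) (2 * k H * deriv k H) H := by
      have := (hk'.pow 2).add_const (μ0 ^ 2)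
      refine this.congr_deriv ?_
      push_cast
      ring
    have hN : HasDerivAt (fun t => k t * (k t ^ 2 + μ0 ^ 2))
        (deriv k H * (k H ^ 2 + μ0 ^ 2) + k H * (2 * k H * deriv k H)) H := hk'.mul h2
    have hM : HasDerivAt (fun t => μ0 - t * (k t ^ 2 + μ0 ^ 2))
        (-(1 * (k H ^ 2 + μ0 ^ 2) + H * (2 * k H * deriv k H))) H :=
      ((hasDerivAt_id H).mul h2).const_sub μ0
    have hD := hN.div hM (ne_of_lt (hMneg H hH))
    refine hD.congr_deriv ?_
    have hkne : k H ≠ 0 := (kpos H hH).ne'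
    have hMne : μ0 - H * (k H ^ 2 + μ0 ^ 2) ≠ 0 := ne_of_lt (hMneg H hH)
    have hAne : k H ^ 2 + μ0 ^ 2 ≠ 0 := by positivity
    rw [hderval H hH]
    have hMne' : μ0 - (k H ^ 2 + μ0 ^ 2) * H ≠ 0 := by rw [mul_comm]; exact hMne
    field_simp
    ring
end

section
/- Fix real constants μ0 > 0 and H > 0, and for each integer n ≥ 1 let k_n(H) be the unique solution k of μ0 + k·tan(k·H) = 0 in ((2n−1)π/(2H), nπ/H), which is a differentiable function of H. Then (dk_n/dH)(H) / k_n(H) → −1/H as n → ∞, and there exists a constant C > 0 such that |dk_n/dH| ≤ C·n and |d²k_n/dH²| ≤ C·n for all n ≥ 1. -/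
open Real Filter

private noncomputable def hfun (μ0 : ℝ) (n : ℕ) (κ : ℝ) : ℝ :=
  ((n : ℝ) * π - Real.arctan (μ0 / κ)) / κ

private lemma hfun_mul (μ0 : ℝ) (n : ℕ) (κ : ℝ) (hκ : κ ≠ 0) :
    hfun μ0 n κ * κ = (n : ℝ) * π - Real.arctan (μ0 / κ) :=
  div_mul_cancel₀ _ hκ

private lemma hfun_lb (μ0 : ℝ) (n : ℕ) (hn : 1 ≤ n) (κ : ℝ) (hκ : 0 < κ) :
    π / 2 < hfun μ0 n κ * κ := by
  rw [hfun_mul μ0 n κ hκ.ne']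
  have h1 := Real.arctan_lt_pi_div_two (μ0 / κ)
  have hn' : (1 : ℝ) ≤ n := by exact_mod_cast hn
  nlinarith [Real.pi_pos]

private lemma hfun_pos (μ0 : ℝ) (n : ℕ) (hn : 1 ≤ n) (κ : ℝ) (hκ : 0 < κ) :
    0 < hfun μ0 n κ := by
  have := hfun_lb μ0 n hn κ hκ
  nlinarith [Real.pi_pos]

private lemma core_ineq (μ0 a κ : ℝ) (hμ0 : 0 < μ0) (ha : 0 < a) (hκ : 0 < κ)
    (h : π / 2 < a * κ) : μ0 < a * (κ ^ 2 + μ0 ^ 2) := by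
  nlinarith [mul_nonneg ha.le (sq_nonneg (κ - μ0)), mul_lt_mul_of_pos_right h hμ0,
    Real.pi_gt_three, mul_pos hμ0 hμ0]

private lemma hfun_deriv (μ0 : ℝ) (hμ0 : 0 < μ0) (n : ℕ) (κ : ℝ) (hκ : 0 < κ) :
    HasDerivAt (hfun μ0 n)
      ((μ0 - hfun μ0 n κ * (κ ^ 2 + μ0 ^ 2)) / (κ * (κ ^ 2 + μ0 ^ 2))) κ := by
  have h1 : HasDerivAt (fun y : ℝ => μ0 / y) ((0 * κ - μ0 * 1) / κ ^ 2) κ :=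
    (hasDerivAt_const κ μ0).div (hasDerivAt_id κ) hκ.ne'
  have h2 : HasDerivAt (fun y : ℝ => Real.arctan (μ0 / y))
      ((1 / (1 + (μ0 / κ) ^ 2)) * ((0 * κ - μ0 * 1) / κ ^ 2)) κ :=
    (Real.hasDerivAt_arctan (μ0 / κ)).comp κ h1
  have h3 : HasDerivAt (hfun μ0 n)
      (((0 - (1 / (1 + (μ0 / κ) ^ 2)) * ((0 * κ - μ0 * 1) / κ ^ 2)) * κ -
        ((n : ℝ) * π - Real.arctan (μ0 / κ)) * 1) / κ ^ 2) κ :=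
    ((hasDerivAt_const κ ((n : ℝ) * π)).sub h2).div (hasDerivAt_id κ) hκ.ne'
  convert h3 using 1
  have hS : κ ^ 2 + μ0 ^ 2 ≠ 0 := by positivity
  have h1p : 1 + (μ0 / κ) ^ 2 ≠ 0 := by positivity
  unfold hfun
  field_simp
  ring

private lemma hfun_anti (μ0 : ℝ) (hμ0 : 0 < μ0) (n : ℕ) (hn : 1 ≤ n) :
    StrictAntiOn (hfun μ0 n) (Set.Ioi 0) := by
  apply strictAntiOn_of_deriv_neg (convex_Ioi 0)
  · intro κ hκ
    exact (hfun_deriv μ0 hμ0 n κ hκ).continuousAt.continuousWithinAt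
  · intro κ hκ
    rw [interior_Ioi] at hκ
    have hκ' : (0:ℝ) < κ := hκ
    rw [(hfun_deriv μ0 hμ0 n κ hκ).deriv]
    apply div_neg_of_neg_of_pos
    · have := core_ineq μ0 (hfun μ0 n κ) κ hμ0 (hfun_pos μ0 n hn κ hκ) hκ
        (hfun_lb μ0 n hn κ hκ)
      linarith
    · positivity

private lemma sol_eq (μ0 : ℝ) (hμ0 : 0 < μ0) (n : ℕ) (hn : 1 ≤ n) (x u : ℝ) (hx : 0 < x)
    (h1 : (2 * (n : ℝ) - 1) * π / (2 * x) < u) (h2 : u < (n : ℝ) * π / x)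
    (heq : μ0 + u * Real.tan (u * x) = 0) :
    0 < u ∧ hfun μ0 n u = x := by
  have hn' : (1 : ℝ) ≤ n := by exact_mod_cast hn
  have hu : 0 < u := by
    have h0 : 0 < (2 * (n : ℝ) - 1) * π / (2 * x) :=
      div_pos (mul_pos (by linarith) Real.pi_pos) (by linarith)
    linarith
  rw [div_lt_iff₀ (by linarith : (0:ℝ) < 2 * x)] at h1
  rw [lt_div_iff₀ hx] at h2
  have hθ1 : (n : ℝ) * π - π / 2 < u * x := by nlinarith [Real.pi_pos]
  have hθ2 : u * x < (n : ℝ) * π := h2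
  have htan : Real.tan (u * x) = -(μ0 / u) := by
    field_simp
    nlinarith [heq]
  have hper : Real.tan (u * x - (n : ℕ) * π) = Real.tan (u * x) :=
    Real.tan_periodic.sub_nat_mul_eq n
  have harc : Real.arctan (Real.tan (u * x - (n : ℝ) * π)) = u * x - (n : ℝ) * π :=
    Real.arctan_tan (by linarith) (by linarith)
  rw [show ((n : ℝ) * π) = ((n : ℕ) : ℝ) * π from rfl] at harc
  rw [hper, htan, Real.arctan_neg] at harc
  refine ⟨hu, ?_⟩
  unfold hfun
  rw [show (n : ℝ) * π - Real.arctan (μ0 / u) = u * x by linarith]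
  rw [mul_comm, mul_div_assoc, div_self hu.ne', mul_one]

private lemma D_facts (μ0 : ℝ) (hμ0 : 0 < μ0) (x u : ℝ) (hx : 0 < x) (hu : 0 < u)
    (hπ : π / 2 < x * u) : 3 * μ0 < x * (u ^ 2 + μ0 ^ 2) := by
  nlinarith [mul_nonneg hx.le (sq_nonneg (u - μ0)), mul_lt_mul_of_pos_right hπ hμ0,
    Real.pi_gt_three, mul_pos hμ0 hμ0]

private lemma sol_pi (μ0 : ℝ) (n : ℕ) (hn : 1 ≤ n) (x u : ℝ) (hu : 0 < u)
    (hfx : hfun μ0 n u = x) : π / 2 < x * u := by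
  have := hfun_lb μ0 n hn u hu
  rwa [hfx] at this

private lemma k_contAt (μ0 : ℝ) (hμ0 : 0 < μ0) (n : ℕ) (hn : 1 ≤ n) (kf : ℝ → ℝ)
    (hsol : ∀ x : ℝ, 0 < x → 0 < kf x ∧ hfun μ0 n (kf x) = x) (x0 : ℝ) (hx0 : 0 < x0) :
    ContinuousAt kf x0 := by
  have anti := hfun_anti μ0 hμ0 n hn
  obtain ⟨hu0, hfx0⟩ := hsol x0 hx0
  rw [ContinuousAt]
  refine tendsto_order.2 ⟨?_, ?_⟩
  · intro a ha
    set a' := max a (kf x0 / 2) with ha'def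
    have ha'0 : 0 < a' := lt_max_of_lt_right (by linarith)
    have ha'lt : a' < kf x0 := max_lt ha (by linarith)
    have hfa' : x0 < hfun μ0 n a' := by
      have := anti (Set.mem_Ioi.2 ha'0) (Set.mem_Ioi.2 hu0) ha'lt
      rwa [hfx0] at this
    filter_upwards [Ioo_mem_nhds hx0 hfa'] with x hx
    obtain ⟨hkx0, hfx⟩ := hsol x hx.1
    rcases lt_trichotomy (kf x) a' with h | h | h
    · have := anti (Set.mem_Ioi.2 hkx0) (Set.mem_Ioi.2 ha'0) h
      rw [hfx] at this
      linarith [hx.2]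
    · have hx2 := hx.2
      rw [← h, hfx] at hx2
      exact absurd hx2 (lt_irrefl x)
    · exact lt_of_le_of_lt (le_max_left _ _) h
  · intro b hb
    set b' := min b (kf x0 + 1) with hb'def
    have hb'0 : 0 < b' := lt_min (lt_trans hu0 hb) (by linarith)
    have hb'gt : kf x0 < b' := lt_min hb (by linarith)
    have hfb' : hfun μ0 n b' < x0 := by
      have := anti (Set.mem_Ioi.2 hu0) (Set.mem_Ioi.2 hb'0) hb'gt
      rwa [hfx0] at this
    filter_upwards [Ioi_mem_nhds hfb'] with x hx
    have hxpos : 0 < x := lt_trans (hfun_pos μ0 n hn b' hb'0) hx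
    obtain ⟨hkx0, hfx⟩ := hsol x hxpos
    rcases lt_trichotomy b' (kf x) with h | h | h
    · have hx' : hfun μ0 n b' < x := hx
      have := anti (Set.mem_Ioi.2 hb'0) (Set.mem_Ioi.2 hkx0) h
      rw [hfx] at this
      linarith
    · have hx' : hfun μ0 n b' < x := hx
      rw [h, hfx] at hx'
      exact absurd hx' (lt_irrefl x)
    · exact lt_of_lt_of_le h (min_le_left _ _)

private lemma k_hasDeriv (μ0 : ℝ) (hμ0 : 0 < μ0) (n : ℕ) (hn : 1 ≤ n) (kf : ℝ → ℝ)
    (hsol : ∀ x : ℝ, 0 < x → 0 < kf x ∧ hfun μ0 n (kf x) = x) (x : ℝ) (hx : 0 < x) :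
    HasDerivAt kf
      (-(kf x * ((kf x) ^ 2 + μ0 ^ 2)) / (x * ((kf x) ^ 2 + μ0 ^ 2) - μ0)) x := by
  obtain ⟨hu0, hfx⟩ := hsol x hx
  have hcont := k_contAt μ0 hμ0 n hn kf hsol x hx
  have hd := hfun_deriv μ0 hμ0 n (kf x) hu0
  rw [hfx] at hd
  have hπx : π / 2 < x * kf x := sol_pi μ0 n hn x (kf x) hu0 hfx
  have hDpos : 0 < x * ((kf x) ^ 2 + μ0 ^ 2) - μ0 := by
    have := core_ineq μ0 x (kf x) hμ0 hx hu0 hπx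
    linarith
  have hne : (μ0 - x * ((kf x) ^ 2 + μ0 ^ 2)) / (kf x * ((kf x) ^ 2 + μ0 ^ 2)) ≠ 0 := by
    apply ne_of_lt
    apply div_neg_of_neg_of_pos
    · linarith
    · positivity
  have hinv := HasDerivAt.of_local_left_inverse hcont hd hne
    (by filter_upwards [Ioi_mem_nhds hx] with y hy using (hsol y hy).2)
  refine hinv.congr_deriv ?_
  symm
  rw [inv_div]
  rw [div_eq_div_iff (by linarith) (by nlinarith [mul_pos hu0 (by positivity : (0:ℝ) < (kf x)^2 + μ0^2)])]
  ring

private lemma bound_first (μ0 H u nn : ℝ) (hμ0 : 0 < μ0) (hH : 0 < H) (hu : 0 < u)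
    (h3μ : 3 * μ0 < H * (u ^ 2 + μ0 ^ 2)) (hun : u * H ≤ nn * π) :
    |(-(u * (u ^ 2 + μ0 ^ 2))) / (H * (u ^ 2 + μ0 ^ 2) - μ0)| ≤ 2 * π * nn / H ^ 2 := by
  have hSpos : (0:ℝ) < u ^ 2 + μ0 ^ 2 := by positivity
  have hDpos : 0 < H * (u ^ 2 + μ0 ^ 2) - μ0 := by linarith
  have h23 : 2 * (H * (u ^ 2 + μ0 ^ 2)) ≤ 3 * (H * (u ^ 2 + μ0 ^ 2) - μ0) := by linarith
  have hnnπ : 0 ≤ nn * π := le_trans (by positivity) hun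
  rw [abs_div, abs_neg, abs_of_pos (mul_pos hu hSpos), abs_of_pos hDpos]
  rw [div_le_div_iff₀ hDpos (by positivity)]
  nlinarith [mul_le_mul hun h23 (by positivity) hnnπ,
    mul_nonneg hnnπ hDpos.le]

private lemma bound_second (μ0 H u q nn : ℝ) (hμ0 : 0 < μ0) (hH : 0 < H) (hu : 0 < u)
    (h3μ : 3 * μ0 < H * (u ^ 2 + μ0 ^ 2))
    (hq : q * (H * (u ^ 2 + μ0 ^ 2) - μ0) = u * (u ^ 2 + μ0 ^ 2)) (hq0 : 0 ≤ q)
    (hun : u * H ≤ nn * π) :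
    |(2 * u * (u ^ 2 + μ0 ^ 2) ^ 2 + 2 * u ^ 3 * (u ^ 2 + μ0 ^ 2)
        - 2 * H * u ^ 2 * (u ^ 2 + μ0 ^ 2) * q) / (H * (u ^ 2 + μ0 ^ 2) - μ0) ^ 2|
      ≤ 16 * π * nn / H ^ 3 := by
  have hSpos : (0:ℝ) < u ^ 2 + μ0 ^ 2 := by positivity
  have hDpos : 0 < H * (u ^ 2 + μ0 ^ 2) - μ0 := by linarith
  have h23 : 2 * (H * (u ^ 2 + μ0 ^ 2)) ≤ 3 * (H * (u ^ 2 + μ0 ^ 2) - μ0) := by linarith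
  have hnnπ : 0 ≤ nn * π := le_trans (by positivity) hun
  have h2Hq : 2 * H * q ≤ 3 * u := by
    nlinarith [hq, hDpos, mul_le_mul_of_nonneg_left h23 hu.le]
  have hub : 2 * u * (u ^ 2 + μ0 ^ 2) ^ 2 + 2 * u ^ 3 * (u ^ 2 + μ0 ^ 2)
      - 2 * H * u ^ 2 * (u ^ 2 + μ0 ^ 2) * q ≤ 4 * u * (u ^ 2 + μ0 ^ 2) ^ 2 := by
    nlinarith [mul_nonneg (mul_nonneg (mul_nonneg hH.le (sq_nonneg u)) hSpos.le) hq0,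
      mul_nonneg (mul_nonneg hu.le hSpos.le) (sq_nonneg μ0)]
  have hlb : 0 ≤ 2 * u * (u ^ 2 + μ0 ^ 2) ^ 2 + 2 * u ^ 3 * (u ^ 2 + μ0 ^ 2)
      - 2 * H * u ^ 2 * (u ^ 2 + μ0 ^ 2) * q := by
    nlinarith [mul_le_mul_of_nonneg_left h2Hq (mul_nonneg (sq_nonneg u) hSpos.le),
      mul_nonneg (mul_nonneg hu.le hSpos.le) (sq_nonneg μ0),
      mul_nonneg hu.le (sq_nonneg (u ^ 2 + μ0 ^ 2))]
  rw [abs_div, abs_of_nonneg hlb, abs_of_pos (by positivity : (0:ℝ) < (H * (u ^ 2 + μ0 ^ 2) - μ0) ^ 2)]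
  rw [div_le_div_iff₀ (by positivity) (by positivity)]
  have h49 : 4 * (H * (u ^ 2 + μ0 ^ 2)) ^ 2 ≤ 9 * (H * (u ^ 2 + μ0 ^ 2) - μ0) ^ 2 := by
    nlinarith [mul_self_le_mul_self (by positivity : (0:ℝ) ≤ 2 * (H * (u ^ 2 + μ0 ^ 2))) h23]
  nlinarith [mul_le_mul hun h49 (by positivity) hnnπ,
    mul_nonneg hnnπ (sq_nonneg (H * (u ^ 2 + μ0 ^ 2) - μ0)), hub,
    mul_le_mul_of_nonneg_left hub (mul_nonneg hH.le (mul_nonneg hH.le hH.le))]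

private lemma second_deriv_eq (μ0 H : ℝ) (hμ0 : 0 < μ0) (hH : 0 < H) (kf : ℝ → ℝ)
    (hderiv : ∀ x : ℝ, 0 < x →
      HasDerivAt kf (-(kf x * ((kf x) ^ 2 + μ0 ^ 2)) / (x * ((kf x) ^ 2 + μ0 ^ 2) - μ0)) x)
    (hDne : H * ((kf H) ^ 2 + μ0 ^ 2) - μ0 ≠ 0) :
    deriv (deriv kf) H =
      (2 * kf H * ((kf H) ^ 2 + μ0 ^ 2) ^ 2 + 2 * (kf H) ^ 3 * ((kf H) ^ 2 + μ0 ^ 2)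
        - 2 * H * (kf H) ^ 2 * ((kf H) ^ 2 + μ0 ^ 2) *
          (kf H * ((kf H) ^ 2 + μ0 ^ 2) / (H * ((kf H) ^ 2 + μ0 ^ 2) - μ0)))
        / (H * ((kf H) ^ 2 + μ0 ^ 2) - μ0) ^ 2 := by
  have hEq : deriv kf =ᶠ[nhds H]
      fun x => -(kf x * ((kf x) ^ 2 + μ0 ^ 2)) / (x * ((kf x) ^ 2 + μ0 ^ 2) - μ0) := by
    filter_upwards [Ioi_mem_nhds hH] with x hx using (hderiv x hx).deriv
  rw [hEq.deriv_eq]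
  refine HasDerivAt.deriv ?_
  have hku := hderiv H hH
  have hcomb := (hku.mul ((hku.pow 2).add_const (μ0 ^ 2))).neg.div
    (((hasDerivAt_id H).mul ((hku.pow 2).add_const (μ0 ^ 2))).sub_const μ0) hDne
  refine hcomb.congr_deriv ?_
  symm
  norm_num only [Pi.mul_apply, Pi.pow_apply, Pi.neg_apply, id, Nat.cast_ofNat]
  rw [div_left_inj' (pow_ne_zero 2 hDne)]
  have hI := inv_mul_cancel₀ hDne
  linear_combination (-(kf H * (kf H ^ 2 + μ0 ^ 2) ^ 2 + 2 * kf H ^ 3 * (kf H ^ 2 + μ0 ^ 2))) * hI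

/-- Asymptotic estimates of Proposition 1 (Eqs. (3.4), (3.5), (A8)):
`(dkₙ/dH)/kₙ → −1/H` as `n → ∞`, and `|dkₙ/dH| ≤ C·n`, `|d²kₙ/dH²| ≤ C·n`. -/
theorem eigenvalue_derivative_asymptotics (μ0 H : ℝ) (hμ0 : 0 < μ0) (hH : 0 < H)
    (k : ℕ → ℝ → ℝ)
    (hk : ∀ n : ℕ, 1 ≤ n → ∀ H' : ℝ, 0 < H' →
      k n H' ∈ Set.Ioo ((2 * (n : ℝ) - 1) * π / (2 * H')) ((n : ℝ) * π / H') ∧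
      μ0 + k n H' * Real.tan (k n H' * H') = 0) :
    Tendsto (fun n : ℕ => deriv (k n) H / k n H) atTop (nhds (-1 / H)) ∧
    ∃ C : ℝ, 0 < C ∧ ∀ n : ℕ, 1 ≤ n →
      |deriv (k n) H| ≤ C * n ∧ |deriv (deriv (k n)) H| ≤ C * n := by
  have hsol : ∀ n : ℕ, 1 ≤ n → ∀ x : ℝ, 0 < x → 0 < k n x ∧ hfun μ0 n (k n x) = x := by
    intro n hn x hx
    obtain ⟨⟨h1, h2⟩, heq⟩ := hk n hn x hx
    exact sol_eq μ0 hμ0 n hn x (k n x) hx h1 h2 heq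
  have hderiv : ∀ n : ℕ, 1 ≤ n → ∀ x : ℝ, 0 < x →
      HasDerivAt (k n)
        (-(k n x * ((k n x) ^ 2 + μ0 ^ 2)) / (x * ((k n x) ^ 2 + μ0 ^ 2) - μ0)) x :=
    fun n hn x hx => k_hasDeriv μ0 hμ0 n hn (k n) (hsol n hn) x hx
  -- common facts at H
  have hfactsH : ∀ n : ℕ, 1 ≤ n →
      0 < k n H ∧ 3 * μ0 < H * ((k n H) ^ 2 + μ0 ^ 2) ∧ k n H * H ≤ (n : ℝ) * π := by
    intro n hn
    obtain ⟨hu0, hfx⟩ := hsol n hn H hH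
    have hπ2 : π / 2 < H * k n H := sol_pi μ0 n hn H (k n H) hu0 hfx
    have h3μ := D_facts μ0 hμ0 H (k n H) hH hu0 hπ2
    have h2 := (hk n hn H hH).1.2
    rw [lt_div_iff₀ hH] at h2
    exact ⟨hu0, h3μ, h2.le⟩
  constructor
  · -- the limit
    have hklb : ∀ n : ℕ, 1 ≤ n → (n : ℝ) * (π / (2 * H)) ≤ k n H := by
      intro n hn
      have h1 := (hk n hn H hH).1.1
      have hn' : (1 : ℝ) ≤ n := by exact_mod_cast hn
      rw [div_lt_iff₀ (by positivity)] at h1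
      rw [mul_div_assoc', div_le_iff₀ (by positivity)]
      nlinarith [Real.pi_pos]
    have hktop : Tendsto (fun n : ℕ => k n H) atTop atTop := by
      apply tendsto_atTop_mono' atTop ?_ (tendsto_natCast_atTop_atTop.atTop_mul_const
        (by positivity : (0:ℝ) < π / (2 * H)))
      filter_upwards [eventually_ge_atTop 1] with n hn using hklb n hn
    have hStop : Tendsto (fun n : ℕ => (k n H) ^ 2 + μ0 ^ 2) atTop atTop := by
      have h2 := tendsto_atTop_add_const_right atTop (μ0 ^ 2) (hktop.atTop_mul_atTop₀ hktop)
      refine h2.congr fun n => by ring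
    have h0 : Tendsto (fun n : ℕ => μ0 / ((k n H) ^ 2 + μ0 ^ 2)) atTop (nhds 0) :=
      tendsto_const_nhds.div_atTop hStop
    have hlim : Tendsto (fun n : ℕ => -1 / (H - μ0 / ((k n H) ^ 2 + μ0 ^ 2))) atTop
        (nhds (-1 / H)) := by
      have := Tendsto.div (tendsto_const_nhds : Tendsto (fun _ : ℕ => (-1:ℝ)) atTop (nhds (-1)))
        (tendsto_const_nhds.sub h0) (by simpa using hH.ne')
      rw [sub_zero] at this
      exact this
    apply hlim.congr'
    filter_upwards [eventually_ge_atTop 1] with n hn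
    obtain ⟨hu0, h3μ, hun⟩ := hfactsH n hn
    have hSpos : (0:ℝ) < (k n H) ^ 2 + μ0 ^ 2 := by positivity
    have hDpos : 0 < H * ((k n H) ^ 2 + μ0 ^ 2) - μ0 := by linarith
    rw [(hderiv n hn H hH).deriv]
    rw [div_div]
    have hd1 : H - μ0 / ((k n H) ^ 2 + μ0 ^ 2)
        = (H * ((k n H) ^ 2 + μ0 ^ 2) - μ0) / ((k n H) ^ 2 + μ0 ^ 2) := by
      field_simp
    rw [hd1, div_div_eq_mul_div, neg_one_mul, neg_div, neg_div, neg_inj]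
    rw [div_eq_div_iff hDpos.ne' (by positivity : (0:ℝ) < (H * ((k n H) ^ 2 + μ0 ^ 2) - μ0) * k n H).ne']
    ring
  · -- the bounds
    refine ⟨2 * π / H ^ 2 + 16 * π / H ^ 3, by positivity, ?_⟩
    intro n hn
    obtain ⟨hu0, h3μ, hun⟩ := hfactsH n hn
    have hn' : (1 : ℝ) ≤ n := by exact_mod_cast hn
    have hSpos : (0:ℝ) < (k n H) ^ 2 + μ0 ^ 2 := by positivity
    have hDpos : 0 < H * ((k n H) ^ 2 + μ0 ^ 2) - μ0 := by linarith
    have hnn0 : (0:ℝ) ≤ (n:ℝ) := by linarith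
    constructor
    · have hb := bound_first μ0 H (k n H) n hμ0 hH hu0 h3μ hun
      rw [(hderiv n hn H hH).deriv]
      have h1 : 2 * π * (n:ℝ) / H ^ 2 = 2 * π / H ^ 2 * (n:ℝ) := by ring
      have h2 : (0:ℝ) ≤ 16 * π / H ^ 3 * (n:ℝ) := by positivity
      calc |(-(k n H * ((k n H) ^ 2 + μ0 ^ 2)) / (H * ((k n H) ^ 2 + μ0 ^ 2) - μ0))|
          ≤ 2 * π * (n:ℝ) / H ^ 2 := hb
        _ ≤ (2 * π / H ^ 2 + 16 * π / H ^ 3) * (n:ℝ) := by rw [h1] at *; nlinarith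
    · have hq0 : 0 ≤ k n H * ((k n H) ^ 2 + μ0 ^ 2) / (H * ((k n H) ^ 2 + μ0 ^ 2) - μ0) :=
        div_nonneg (by positivity) hDpos.le
      have hq : k n H * ((k n H) ^ 2 + μ0 ^ 2) / (H * ((k n H) ^ 2 + μ0 ^ 2) - μ0)
          * (H * ((k n H) ^ 2 + μ0 ^ 2) - μ0) = k n H * ((k n H) ^ 2 + μ0 ^ 2) :=
        div_mul_cancel₀ _ hDpos.ne'
      have heq2 := second_deriv_eq μ0 H hμ0 hH (k n) (hderiv n hn) hDpos.ne'
      rw [heq2]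
      have hb := bound_second μ0 H (k n H)
        (k n H * ((k n H) ^ 2 + μ0 ^ 2) / (H * ((k n H) ^ 2 + μ0 ^ 2) - μ0)) n
        hμ0 hH hu0 h3μ hq hq0 hun
      have h1 : 16 * π * (n:ℝ) / H ^ 3 = 16 * π / H ^ 3 * (n:ℝ) := by ring
      have h2 : (0:ℝ) ≤ 2 * π / H ^ 2 * (n:ℝ) := by positivity
      calc |(2 * k n H * ((k n H) ^ 2 + μ0 ^ 2) ^ 2 + 2 * (k n H) ^ 3 * ((k n H) ^ 2 + μ0 ^ 2)
            - 2 * H * (k n H) ^ 2 * ((k n H) ^ 2 + μ0 ^ 2) *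
              (k n H * ((k n H) ^ 2 + μ0 ^ 2) / (H * ((k n H) ^ 2 + μ0 ^ 2) - μ0)))
            / (H * ((k n H) ^ 2 + μ0 ^ 2) - μ0) ^ 2|
          ≤ 16 * π * (n:ℝ) / H ^ 3 := hb
        _ ≤ (2 * π / H ^ 2 + 16 * π / H ^ 3) * (n:ℝ) := by rw [h1] at *; nlinarith
end

section
/- Fix real constants μ0 > 0 and H > 0, and for each integer n ≥ 1 let k_n(H) be the unique solution k of μ0 + k·tan(k·H) = 0 in ((2n−1)π/(2H), nπ/H), a differentiable function of H. Then one has the exact identity H·(dk_n/dH) + k_n = −μ0·k_n / (−μ0 + H·(k_n² + μ0²)), and consequently there exists a constant C > 0 such that |H·(dk_n/dH) + k_n| ≤ C/n for all n ≥ 1 (equivalently, the x-derivative ∂_x(k_n H) along any C¹ depth profile is O(n^{−1})). -/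
open Real Topology Filter

lemma aux_cos_ne_zero (n : ℕ) {θ : ℝ} (h1 : (2*(n:ℝ)-1)*π/2 < θ) (h2 : θ < (n:ℝ)*π) :
    Real.cos θ ≠ 0 := by
  rw [Real.cos_ne_zero_iff]
  intro m hm
  have hπ := Real.pi_pos
  rw [hm] at h1 h2
  have h1' : (2*(n:ℝ)-1) < 2*(m:ℝ)+1 := by nlinarith
  have h2' : (2*(m:ℝ)+1) < 2*(n:ℝ) := by nlinarith
  have h1'' : (2*(n:ℤ)-1) < 2*m+1 := by exact_mod_cast h1'
  have h2'' : (2*(m:ℤ)+1) < 2*n := by exact_mod_cast h2'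
  omega

lemma aux_hasDerivAt (θ : ℝ) (h : Real.cos θ ≠ 0) :
    HasDerivAt (fun x => x * Real.tan x) (Real.tan θ + θ * (1 + Real.tan θ^2)) θ := by
  have h1 : HasDerivAt (fun x => x * Real.tan x) (1 * Real.tan θ + θ * (1/Real.cos θ^2)) θ :=
    (hasDerivAt_id θ).mul (Real.hasDerivAt_tan h)
  convert h1 using 1
  have hc : Real.cos θ ^ 2 ≠ 0 := pow_ne_zero _ h
  rw [Real.tan_eq_sin_div_cos]
  field_simp
  linear_combination θ * Real.cos_sq_add_sin_sq θ

lemma aux_A_pos {θ : ℝ} (h1 : 1 < θ) : 0 < Real.tan θ + θ * (1 + Real.tan θ^2) := by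
  nlinarith [sq_nonneg (Real.tan θ + 1), sq_nonneg (Real.tan θ)]


set_option maxHeartbeats 1600000 in
/-- The key cancellation identity behind Lemma A1 (Eqs. (A24a), (A27)):
`H·(dkₙ/dH) + kₙ = −μ₀kₙ/(−μ₀ + H(kₙ² + μ₀²))`, hence `|H·(dkₙ/dH) + kₙ| ≤ C/n`,
i.e. `∂ₓ(kₙH) = O(n⁻¹)` along any C¹ depth profile. -/
theorem eigenvalue_cancellation_identity (μ0 H : ℝ) (hμ0 : 0 < μ0) (hH : 0 < H)
    (k : ℕ → ℝ → ℝ)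
    (hk : ∀ n : ℕ, 1 ≤ n → ∀ H' : ℝ, 0 < H' →
      k n H' ∈ Set.Ioo ((2 * (n : ℝ) - 1) * π / (2 * H')) ((n : ℝ) * π / H') ∧
      μ0 + k n H' * Real.tan (k n H' * H') = 0) :
    (∀ n : ℕ, 1 ≤ n →
      H * deriv (k n) H + k n H =
        -(μ0 * k n H) / (-μ0 + H * ((k n H) ^ 2 + μ0 ^ 2))) ∧
    ∃ C : ℝ, 0 < C ∧ ∀ n : ℕ, 1 ≤ n →
      |H * deriv (k n) H + k n H| ≤ C / n := by
  have hπ := Real.pi_pos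
  have hπ3 := Real.pi_gt_three
  -- membership of θ = k n H' * H' in the fixed interval
  have hθmem : ∀ n : ℕ, 1 ≤ n → ∀ H' : ℝ, 0 < H' →
      k n H' * H' ∈ Set.Ioo ((2*(n:ℝ)-1)*π/2) ((n:ℝ)*π) := by
    intro n hn H' hH'
    obtain ⟨⟨ha, hb⟩, -⟩ := hk n hn H' hH'
    constructor
    · have h := mul_lt_mul_of_pos_right ha hH'
      calc (2*(n:ℝ)-1)*π/2 = (2*(n:ℝ)-1)*π/(2*H')*H' := by field_simp
        _ < k n H' * H' := h
    · have h := mul_lt_mul_of_pos_right hb hH'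
      calc k n H' * H' < (n:ℝ)*π/H'*H' := h
        _ = (n:ℝ)*π := by field_simp
  -- basic facts at H
  have hfacts : ∀ n : ℕ, 1 ≤ n → 0 < k n H ∧ 3/2 < H * k n H ∧
      0 < -μ0 + H * ((k n H)^2 + μ0^2) := by
    intro n hn
    have hn1 : (1:ℝ) ≤ n := by exact_mod_cast hn
    have hθ0 := hθmem n hn H hH
    have hL : 3/2 < (2*(n:ℝ)-1)*π/2 := by nlinarith
    have hHk : 3/2 < H * k n H := by nlinarith [hθ0.1]
    have hk0pos : 0 < k n H := by
      rcases mul_pos_iff.1 (show 0 < k n H * H by nlinarith) with ⟨h1, _⟩ | ⟨_, h2⟩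
      · exact h1
      · linarith
    refine ⟨hk0pos, hHk, ?_⟩
    nlinarith [mul_nonneg (sub_nonneg.2 hHk.le) (sq_nonneg (k n H)),
      mul_nonneg (sub_nonneg.2 hHk.le) (sq_nonneg μ0),
      sq_nonneg (k n H - μ0), mul_pos hk0pos hμ0]
  -- the key identity
  have key : ∀ n : ℕ, 1 ≤ n →
      H * deriv (k n) H + k n H =
        -(μ0 * k n H) / (-μ0 + H * ((k n H) ^ 2 + μ0 ^ 2)) := by
    intro n hn
    have hn1 : (1:ℝ) ≤ n := by exact_mod_cast hn
    obtain ⟨hk0pos, hHk, hD⟩ := hfacts n hn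
    obtain ⟨hmem, heq⟩ := hk n hn H hH
    set k0 := k n H with hk0def
    set L := (2*(n:ℝ)-1)*π/2 with hLdef
    set R := (n:ℝ)*π with hRdef
    have hθ0 : k0 * H ∈ Set.Ioo L R := hθmem n hn H hH
    have hL1 : 1 < L := by rw [hLdef]; nlinarith
    have hcos : ∀ θ ∈ Set.Ioo L R, Real.cos θ ≠ 0 := fun θ hθ =>
      aux_cos_ne_zero n hθ.1 hθ.2
    set f : ℝ → ℝ := fun x => x * Real.tan x with hfdef
    have hmono : StrictMonoOn f (Set.Ioo L R) := by
      apply strictMonoOn_of_deriv_pos (convex_Ioo L R)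
      · intro θ hθ
        exact (aux_hasDerivAt θ (hcos θ hθ)).continuousAt.continuousWithinAt
      · intro θ hθ
        rw [interior_Ioo] at hθ
        rw [(aux_hasDerivAt θ (hcos θ hθ)).deriv]
        exact aux_A_pos (lt_trans hL1 hθ.1)
    have hfval : ∀ H' : ℝ, 0 < H' → f (k n H' * H') = -μ0 * H' := by
      intro H' hH'
      obtain ⟨-, he⟩ := hk n hn H' hH'
      show k n H' * H' * Real.tan (k n H' * H') = -μ0 * H'
      linear_combination H' * he
    -- continuity of h := fun H' => k n H' * H' at H
    have hcont : ContinuousAt (fun H' => k n H' * H') H := by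
      rw [ContinuousAt, tendsto_order]
      constructor
      · intro a ha
        have hmid : L < (L + k0*H)/2 := by nlinarith [hθ0.1]
        have hmid2 : (L + k0*H)/2 < k0*H := by nlinarith [hθ0.1]
        set a' := max a ((L + k0*H)/2) with ha'def
        have ha'1 : a' < k0*H := max_lt ha hmid2
        have ha'mem : a' ∈ Set.Ioo L R :=
          ⟨lt_of_lt_of_le hmid (le_max_right _ _), lt_trans ha'1 hθ0.2⟩
        have hfa' : f a' < -μ0 * H := by
          have h := hmono ha'mem hθ0 ha'1
          rwa [hfval H hH] at h
        have hev1 : ∀ᶠ H' in 𝓝 H, f a' < -μ0 * H' := by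
          have htd : Filter.Tendsto (fun H' : ℝ => -μ0 * H') (𝓝 H) (𝓝 (-μ0 * H)) :=
            (continuous_const.mul continuous_id).tendsto H
          exact htd.eventually (eventually_gt_nhds hfa')
        filter_upwards [hev1, eventually_gt_nhds hH] with H' h1 h2
        by_contra hcon
        push_neg at hcon
        have hle : k n H' * H' ≤ a' := hcon.trans (le_max_left _ _)
        have := hmono.monotoneOn (hθmem n hn H' h2) ha'mem hle
        rw [hfval H' h2] at this
        linarith
      · intro b hb
        have hmid : k0*H < (k0*H + R)/2 := by nlinarith [hθ0.2]
        have hmid2 : (k0*H + R)/2 < R := by nlinarith [hθ0.2]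
        set b' := min b ((k0*H + R)/2) with hb'def
        have hb'1 : k0*H < b' := lt_min hb hmid
        have hb'mem : b' ∈ Set.Ioo L R :=
          ⟨lt_trans hθ0.1 hb'1, lt_of_le_of_lt (min_le_right _ _) hmid2⟩
        have hfb' : -μ0 * H < f b' := by
          have h := hmono hθ0 hb'mem hb'1
          rwa [hfval H hH] at h
        have hev1 : ∀ᶠ H' in 𝓝 H, -μ0 * H' < f b' := by
          have htd : Filter.Tendsto (fun H' : ℝ => -μ0 * H') (𝓝 H) (𝓝 (-μ0 * H)) :=
            (continuous_const.mul continuous_id).tendsto H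
          exact htd.eventually (eventually_lt_nhds hfb')
        filter_upwards [hev1, eventually_gt_nhds hH] with H' h1 h2
        by_contra hcon
        push_neg at hcon
        have hle : b' ≤ k n H' * H' := (min_le_left _ _).trans hcon
        have := hmono.monotoneOn hb'mem (hθmem n hn H' h2) hle
        rw [hfval H' h2] at this
        linarith
    -- derivative via the inverse function theorem
    set A := Real.tan (k0*H) + (k0*H) * (1 + Real.tan (k0*H)^2) with hAdef
    have hApos : 0 < A := aux_A_pos (lt_trans hL1 hθ0.1)
    have hf' : HasDerivAt f A (k0*H) := aux_hasDerivAt _ (hcos _ hθ0)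
    have harg : ∀ x : ℝ, -(-μ0 * x / μ0) = x := by
      intro x; field_simp
    set g : ℝ → ℝ := fun y => k n (-(y/μ0)) * (-(y/μ0)) with hgdef
    have hgval : g (-μ0 * H) = k0 * H := by
      show k n (-(-μ0*H/μ0)) * (-(-μ0*H/μ0)) = k0 * H
      rw [harg H]
    have hg_cont : ContinuousAt g (-μ0 * H) := by
      have hc2' : Filter.Tendsto (fun y : ℝ => -(y/μ0)) (𝓝 (-μ0*H)) (𝓝 H) :=
        (Continuous.tendsto' (by fun_prop) _ _ (harg H))
      rw [ContinuousAt, hgval]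
      exact Filter.Tendsto.comp hcont hc2'
    have hfg : ∀ᶠ y in 𝓝 (-μ0 * H), f (g y) = y := by
      filter_upwards [eventually_lt_nhds (show -μ0 * H < 0 by nlinarith)] with y hy
      have hy' : 0 < -(y/μ0) := by
        rw [neg_div']; exact div_pos (neg_pos.2 hy) hμ0
      show f (k n (-(y/μ0)) * (-(y/μ0))) = y
      rw [hfval _ hy']
      field_simp
    have hg_deriv : HasDerivAt g A⁻¹ (-μ0 * H) := by
      refine HasDerivAt.of_local_left_inverse hg_cont ?_ (ne_of_gt hApos) hfg
      rw [hgval]; exact hf'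
    have hlin : HasDerivAt (fun x : ℝ => -μ0 * x) (-μ0) H := by
      simpa using (hasDerivAt_id H).const_mul (-μ0)
    have hcomp : HasDerivAt (fun H' => g (-μ0 * H')) (A⁻¹ * -μ0) H :=
      HasDerivAt.comp H hg_deriv hlin
    have hhh : (fun H' => g (-μ0 * H')) = fun H' => k n H' * H' := by
      funext H'
      show k n (-(-μ0*H'/μ0)) * (-(-μ0*H'/μ0)) = k n H' * H'
      rw [harg H']
    rw [hhh] at hcomp
    have hdiv : HasDerivAt (fun H' => (k n H' * H') / H')
        ((A⁻¹ * -μ0 * H - (k0*H) * 1) / H^2) H :=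
      hcomp.div (hasDerivAt_id H) (ne_of_gt hH)
    have hkderiv : HasDerivAt (k n) ((A⁻¹ * -μ0 * H - (k0*H) * 1) / H^2) H := by
      apply hdiv.congr_of_eventuallyEq
      filter_upwards [eventually_gt_nhds hH] with H' h'
      rw [mul_div_assoc, div_self (ne_of_gt h'), mul_one]
    -- algebra
    have hkA : k0 * A = -μ0 + H * (k0^2 + μ0^2) := by
      rw [hAdef]
      linear_combination (1 + H*(k0 * Real.tan (k0*H) - μ0)) * heq
    have hAne : A ≠ 0 := ne_of_gt hApos
    have hDne : (-μ0 + H * (k0^2 + μ0^2)) ≠ 0 := ne_of_gt hD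
    rw [hkderiv.deriv]
    calc H * ((A⁻¹ * -μ0 * H - (k0*H) * 1) / H^2) + k0 = A⁻¹ * -μ0 := by
          field_simp; ring
      _ = -(μ0 * k0) / (-μ0 + H * (k0^2 + μ0^2)) := by
          rw [← hkA]; field_simp
  refine ⟨key, 2*μ0, by positivity, ?_⟩
  intro n hn
  have hn1 : (1:ℝ) ≤ n := by exact_mod_cast hn
  obtain ⟨hk0pos, hHk, hD⟩ := hfacts n hn
  have hθL := (hθmem n hn H hH).1
  rw [key n hn, abs_div, abs_of_pos hD, abs_neg, abs_of_pos (mul_pos hμ0 hk0pos)]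
  rw [div_le_div_iff₀ hD (by positivity : (0:ℝ) < (n:ℝ))]
  -- μ0 * k0 * n ≤ 2μ0 * D
  have h2D : 2*μ0 ≤ H*(k n H)^2 + 2*H*μ0^2 := by
    nlinarith [mul_nonneg (sub_nonneg.2 hHk.le) (sq_nonneg (k n H)),
      mul_nonneg (sub_nonneg.2 hHk.le) (sq_nonneg μ0),
      sq_nonneg (3*(k n H) - 2*μ0), hk0pos, mul_pos hk0pos hμ0]
  have h3 : (n:ℝ) ≤ (2/3) * (H * k n H) := by
    nlinarith [mul_nonneg (by linarith : (0:ℝ) ≤ 2*(n:ℝ)-2) (by linarith : (0:ℝ) ≤ π-3)]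
  have e1 : μ0 * k n H * (n:ℝ) ≤ μ0 * k n H * ((2/3) * (H * k n H)) :=
    mul_le_mul_of_nonneg_left h3 (mul_pos hμ0 hk0pos).le
  have e2 : μ0 * (2*μ0) ≤ μ0 * (H*(k n H)^2 + 2*H*μ0^2) :=
    mul_le_mul_of_nonneg_left h2D hμ0.le
  nlinarith [e1, e2, mul_nonneg (mul_nonneg hμ0.le hH.le) (sq_nonneg (k n H))]
end

section
/- Fix real constants μ0 > 0 and an integer n ≥ 1. For H > 0 let k_n(H) be the unique solution k of μ0 + k·tan(k·H) = 0 in ((2n−1)π/(2H), nπ/H), and for real h، η with η + h > 0 and z ∈ [−h, η] define Z_n(z; η, h) = cos(k_n(η+h)·(z+h))/cos(k_n(η+h)·(η+h)) and W_n(z; η, h) = sin(k_n(η+h)·(z+h))/cos(k_n(η+h)·(η+h)). Then, writing H = η + h, k_n = k_n(H) and k_n' = (dk_n/dH)(H), the partial derivatives of Z_n with respect to the boundary points exist and satisfy ∂Z_n/∂η = −k_n'·(z+h)·W_n + tan(k_n H)·(k_n'·H + k_n)·Z_n and ∂Z_n/∂h = −(k_n + k_n'·(z+h))·W_n + tan(k_n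 H)·(k_n'·H + k_n)·Z_n, where tan(k_n H) = −μ0/k_n. -/
open Real

private lemma cos_ne_zero_aux (n : ℕ) (hn : 1 ≤ n) {θ : ℝ}
    (hθ : θ ∈ Set.Ioo ((2 * (n : ℝ) - 1) * π / 2) ((n : ℝ) * π)) : Real.cos θ ≠ 0 := by
  intro hc
  rw [Real.cos_eq_zero_iff] at hc
  obtain ⟨m, rfl⟩ := hc
  obtain ⟨h1, h2⟩ := hθ
  have hπ := Real.pi_pos
  have hm1 : (2 * (n : ℝ) - 1) < 2 * (m : ℝ) + 1 := by nlinarith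
  have hm2 : (2 * (m : ℝ) + 1) < 2 * (n : ℝ) := by nlinarith
  have h3 : (n : ℤ) - 1 < m := by
    have h3' : ((n : ℤ) - 1 : ℝ) < ((m : ℤ) : ℝ) := by push_cast; linarith
    exact_mod_cast h3'
  have h4 : m < (n : ℤ) := by
    have h4' : ((m : ℤ) : ℝ) < ((n : ℤ) : ℝ) := by push_cast; linarith
    exact_mod_cast h4'
  omega

private lemma quot_formula_eta (k' zh H0 kH0 s0 c0 sz cz : ℝ) (hc0 : c0 ≠ 0) :
    -k' * zh * (sz / c0) + s0 / c0 * (k' * H0 + kH0) * (cz / c0)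
      = (-sz * (k' * 1 * zh) * c0 - cz * (-s0 * (k' * 1 * H0 + kH0 * 1))) / c0 ^ 2 := by
  field_simp
  ring

private lemma quot_formula_h (k' zh H0 kH0 s0 c0 sz cz : ℝ) (hc0 : c0 ≠ 0) :
    -(kH0 + k' * zh) * (sz / c0) + s0 / c0 * (k' * H0 + kH0) * (cz / c0)
      = (-sz * (k' * 1 * zh + kH0 * 1) * c0 - cz * (-s0 * (k' * 1 * H0 + kH0 * 1))) / c0 ^ 2 := by
  field_simp
  ring

/-- Fréchet (shape) derivative formulas (A16), (A17) of Proposition 2: the derivatives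
of `Zₙ(z; η, h) = cos(kₙ(z+h))/cos(kₙH)` with respect to the boundary points `η` and `h`
exist and equal `−kₙ'(z+h)Wₙ + tan(kₙH)(kₙ'H + kₙ)Zₙ` and
`−(kₙ + kₙ'(z+h))Wₙ + tan(kₙH)(kₙ'H + kₙ)Zₙ`, with `tan(kₙH) = −μ₀/kₙ`. -/
theorem eigenfunction_shape_derivatives (μ0 : ℝ) (hμ0 : 0 < μ0) (n : ℕ) (hn : 1 ≤ n)
    (k : ℝ → ℝ)
    (hk : ∀ H : ℝ, 0 < H →
      k H ∈ Set.Ioo ((2 * (n : ℝ) - 1) * π / (2 * H)) ((n : ℝ) * π / H) ∧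
      μ0 + k H * Real.tan (k H * H) = 0)
    (h η : ℝ) (hH : 0 < η + h) (z : ℝ) (hz : z ∈ Set.Icc (-h) η) :
    Real.tan (k (η + h) * (η + h)) = -μ0 / k (η + h) ∧
    HasDerivAt
      (fun η' : ℝ =>
        Real.cos (k (η' + h) * (z + h)) / Real.cos (k (η' + h) * (η' + h)))
      (-(deriv k (η + h)) * (z + h) *
          (Real.sin (k (η + h) * (z + h)) / Real.cos (k (η + h) * (η + h))) +
        Real.tan (k (η + h) * (η + h)) * (deriv k (η + h) * (η + h) + k (η + h)) *
          (Real.cos (k (η + h) * (z + h)) / Real.cos (k (η + h) * (η + h)))) η ∧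
    HasDerivAt
      (fun h' : ℝ =>
        Real.cos (k (η + h') * (z + h')) / Real.cos (k (η + h') * (η + h')))
      (-(k (η + h) + deriv k (η + h) * (z + h)) *
          (Real.sin (k (η + h) * (z + h)) / Real.cos (k (η + h) * (η + h))) +
        Real.tan (k (η + h) * (η + h)) * (deriv k (η + h) * (η + h) + k (η + h)) *
          (Real.cos (k (η + h) * (z + h)) / Real.cos (k (η + h) * (η + h)))) h := by
  have hπ := Real.pi_pos
  have hπ3 := Real.pi_gt_three
  set H0 := η + h with hH0def
  set a : ℝ := (2 * (n : ℝ) - 1) * π / 2 with ha_def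
  set b : ℝ := (n : ℝ) * π with hb_def
  have hn1 : (1 : ℝ) ≤ (n : ℝ) := by exact_mod_cast hn
  have ha_ge : π / 2 ≤ a := by
    rw [ha_def]; nlinarith
  have ha1 : (1 : ℝ) < a := by nlinarith
  have ha_pos : 0 < a := by linarith
  -- membership of k H * H in the fixed interval
  have hθmem : ∀ H : ℝ, 0 < H → k H * H ∈ Set.Ioo a b := by
    intro H hHpos
    obtain ⟨⟨h1, h2⟩, -⟩ := hk H hHpos
    rw [div_lt_iff₀ (by positivity : (0 : ℝ) < 2 * H)] at h1
    rw [lt_div_iff₀ hHpos] at h2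
    exact ⟨by rw [ha_def]; linarith, by rw [hb_def]; linarith⟩
  -- the implicit equation for θ = k H * H
  have hψeq : ∀ H : ℝ, 0 < H → (k H * H) * Real.tan (k H * H) = -μ0 * H := by
    intro H hHpos
    obtain ⟨-, he⟩ := hk H hHpos
    have h2 : k H * Real.tan (k H * H) = -μ0 := by linarith
    calc (k H * H) * Real.tan (k H * H) = (k H * Real.tan (k H * H)) * H := by ring
      _ = -μ0 * H := by rw [h2]
  -- cos nonvanishing on the interval
  have hcosne : ∀ t ∈ Set.Ioo a b, Real.cos t ≠ 0 := fun t ht =>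
    cos_ne_zero_aux n hn ht
  -- derivative of ψ t = t * tan t
  set ψ : ℝ → ℝ := fun t => t * Real.tan t with hψdef
  have hψder : ∀ t ∈ Set.Ioo a b,
      HasDerivAt ψ (1 * Real.tan t + t * (1 / Real.cos t ^ 2)) t := fun t ht =>
    (hasDerivAt_id t).mul (Real.hasDerivAt_tan (hcosne t ht))
  have hψpos : ∀ t ∈ Set.Ioo a b, 0 < 1 * Real.tan t + t * (1 / Real.cos t ^ 2) := by
    intro t ht
    have hc := hcosne t ht
    have hc2 : 0 < Real.cos t ^ 2 := by positivity
    have hsc : -(1 / 2 : ℝ) ≤ Real.sin t * Real.cos t := by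
      nlinarith [sq_nonneg (Real.sin t + Real.cos t), Real.sin_sq_add_cos_sq t]
    have ht1 : 1 < t := lt_trans ha1 ht.1
    have heqv : 1 * Real.tan t + t * (1 / Real.cos t ^ 2)
        = (Real.sin t * Real.cos t + t) / Real.cos t ^ 2 := by
      rw [Real.tan_eq_sin_div_cos]; field_simp
    rw [heqv]
    apply div_pos (by linarith) hc2
  have hmono : StrictMonoOn ψ (Set.Ioo a b) := by
    apply strictMonoOn_of_deriv_pos (convex_Ioo a b)
    · intro t ht
      exact (hψder t ht).continuousAt.continuousWithinAt
    · intro t ht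
      rw [interior_Ioo] at ht
      rw [(hψder t ht).deriv]
      exact hψpos t ht
  set θ0 : ℝ := k H0 * H0 with hθ0def
  have hθ0mem : θ0 ∈ Set.Ioo a b := hθmem H0 hH
  have hc0 : Real.cos θ0 ≠ 0 := hcosne θ0 hθ0mem
  have hkpos : 0 < k H0 := by
    have := hθ0mem.1
    nlinarith
  -- continuity of H ↦ k H * H at H0
  have hcont : ContinuousAt (fun H => k H * H) H0 := by
    rw [Metric.continuousAt_iff]
    intro ε hε
    set ε' := min (ε / 2) (min ((θ0 - a) / 2) ((b - θ0) / 2)) with hε'def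
    have hε'1 : ε' ≤ ε / 2 := min_le_left _ _
    have hε'2 : ε' ≤ (θ0 - a) / 2 := le_trans (min_le_right _ _) (min_le_left _ _)
    have hε'3 : ε' ≤ (b - θ0) / 2 := le_trans (min_le_right _ _) (min_le_right _ _)
    have hε'pos : 0 < ε' := by
      apply lt_min (by linarith)
      exact lt_min (by linarith [hθ0mem.1]) (by linarith [hθ0mem.2])
    have hmem1 : θ0 + ε' ∈ Set.Ioo a b :=
      ⟨by linarith [hθ0mem.1], by linarith [hθ0mem.2]⟩
    have hmem2 : θ0 - ε' ∈ Set.Ioo a b :=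
      ⟨by linarith [hθ0mem.1], by linarith [hθ0mem.2]⟩
    set δ1 := ψ (θ0 + ε') - ψ θ0 with hδ1def
    set δ2 := ψ θ0 - ψ (θ0 - ε') with hδ2def
    have hδ1 : 0 < δ1 := sub_pos.2 (hmono hθ0mem hmem1 (by linarith))
    have hδ2 : 0 < δ2 := sub_pos.2 (hmono hmem2 hθ0mem (by linarith))
    refine ⟨min (H0 / 2) (min δ1 δ2 / μ0), by positivity, ?_⟩
    intro H hdist
    rw [Real.dist_eq] at hdist ⊢
    have hd1 : |H - H0| < H0 / 2 := lt_of_lt_of_le hdist (min_le_left _ _)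
    have hd2 : |H - H0| < min δ1 δ2 / μ0 := lt_of_lt_of_le hdist (min_le_right _ _)
    have hHb := abs_lt.1 hd1
    have hHpos : 0 < H := by linarith [hHb.1]
    have hmemH := hθmem H hHpos
    have key : ψ (k H * H) - ψ θ0 = μ0 * (H0 - H) := by
      show (k H * H) * Real.tan (k H * H) - (k H0 * H0) * Real.tan (k H0 * H0)
        = μ0 * (H0 - H)
      rw [hψeq H hHpos, hψeq H0 hH]; ring
    have habs : |ψ (k H * H) - ψ θ0| < min δ1 δ2 := by
      rw [key, abs_mul, abs_of_pos hμ0]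
      have : |H0 - H| < min δ1 δ2 / μ0 := by rwa [abs_sub_comm]
      calc μ0 * |H0 - H| < μ0 * (min δ1 δ2 / μ0) := by
            exact mul_lt_mul_of_pos_left this hμ0
        _ = min δ1 δ2 := by field_simp
    have hub := abs_lt.1 habs
    have hlt : k H * H < θ0 + ε' := by
      by_contra hge
      push_neg at hge
      have hle : ψ (θ0 + ε') ≤ ψ (k H * H) := hmono.monotoneOn hmem1 hmemH hge
      have : δ1 ≤ ψ (k H * H) - ψ θ0 := by rw [hδ1def]; linarith
      have h1 : ψ (k H * H) - ψ θ0 < min δ1 δ2 := hub.2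
      have := lt_of_le_of_lt this h1
      exact absurd this (not_lt.2 (min_le_left _ _))
    have hgt : θ0 - ε' < k H * H := by
      by_contra hge
      push_neg at hge
      have hle : ψ (k H * H) ≤ ψ (θ0 - ε') := hmono.monotoneOn hmemH hmem2 hge
      have : δ2 ≤ -(ψ (k H * H) - ψ θ0) := by rw [hδ2def]; linarith
      have h1 : -(min δ1 δ2) < ψ (k H * H) - ψ θ0 := hub.1
      have := lt_of_le_of_lt this (by linarith : -(ψ (k H * H) - ψ θ0) < min δ1 δ2)
      exact absurd this (not_lt.2 (min_le_right _ _))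
    have : |k H * H - θ0| < ε' := abs_lt.2 ⟨by linarith, by linarith⟩
    calc |k H * H - k H0 * H0| = |k H * H - θ0| := by rw [hθ0def]
      _ < ε' := this
      _ < ε := by linarith
  -- eventual positivity near H0
  have hev : ∀ᶠ H in nhds H0, 0 < H := eventually_gt_nhds hH
  -- inverse function theorem setup
  set ψ' : ℝ := 1 * Real.tan θ0 + θ0 * (1 / Real.cos θ0 ^ 2) with hψ'def
  have hψ'pos : 0 < ψ' := hψpos θ0 hθ0mem
  have hfd : HasDerivAt (fun t => -(ψ t) / μ0) (-ψ' / μ0) θ0 :=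
    ((hψder θ0 hθ0mem).neg).div_const μ0
  have hf'ne : -ψ' / μ0 ≠ 0 := by
    have : -ψ' / μ0 < 0 := div_neg_of_neg_of_pos (by linarith) hμ0
    linarith
  have hfg : ∀ᶠ H in nhds H0, -(ψ (k H * H)) / μ0 = H := by
    filter_upwards [hev] with H hHpos
    have := hψeq H hHpos
    show -((k H * H) * Real.tan (k H * H)) / μ0 = H
    rw [this]; field_simp
  have hθd : HasDerivAt (fun H => k H * H) (-ψ' / μ0)⁻¹ H0 :=
    HasDerivAt.of_local_left_inverse hcont hfd hf'ne hfg
  -- derivative of k itself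
  have hH0ne : H0 ≠ 0 := ne_of_gt hH
  have hkd : HasDerivAt k (((-ψ' / μ0)⁻¹ * H0 - (k H0 * H0) * 1) / H0 ^ 2) H0 := by
    have hdiv : HasDerivAt (fun H => (k H * H) / H)
        (((-ψ' / μ0)⁻¹ * H0 - (k H0 * H0) * 1) / H0 ^ 2) H0 :=
      hθd.div (hasDerivAt_id H0) hH0ne
    apply hdiv.congr_of_eventuallyEq
    filter_upwards [hev] with H hHpos
    field_simp
  have hkd' : HasDerivAt k (deriv k H0) H0 := by
    rw [hkd.deriv]; exact hkd
  set k' : ℝ := deriv k H0 with hk'def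
  -- first conjunct
  have htan : Real.tan (k H0 * H0) = -μ0 / k H0 := by
    obtain ⟨-, he⟩ := hk H0 hH
    field_simp
    linarith
  refine ⟨htan, ?_, ?_⟩
  -- second conjunct: derivative in η
  · have hadd : HasDerivAt (fun η' : ℝ => η' + h) 1 η := (hasDerivAt_id η).add_const h
    have hk1 : HasDerivAt (fun η' : ℝ => k (η' + h)) (k' * 1) η :=
      hkd'.comp η hadd
    have hinN : HasDerivAt (fun η' : ℝ => k (η' + h) * (z + h)) (k' * 1 * (z + h)) η :=
      hk1.mul_const (z + h)
    have hN : HasDerivAt (fun η' : ℝ => Real.cos (k (η' + h) * (z + h)))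
        (-Real.sin (k H0 * (z + h)) * (k' * 1 * (z + h))) η :=
      hinN.cos
    have hinD : HasDerivAt (fun η' : ℝ => k (η' + h) * (η' + h))
        (k' * 1 * H0 + k H0 * 1) η := hk1.mul hadd
    have hD : HasDerivAt (fun η' : ℝ => Real.cos (k (η' + h) * (η' + h)))
        (-Real.sin (k H0 * H0) * (k' * 1 * H0 + k H0 * 1)) η :=
      hinD.cos
    have hq := hN.div hD (by exact hc0)
    refine hq.congr_deriv (Eq.symm ?_)
    have e1 : Real.cos (k (η + h) * (η + h)) = Real.cos θ0 := rfl
    have e2 : Real.cos (k (η + h) * (z + h)) = Real.cos (k H0 * (z + h)) := rfl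
    have e3 : Real.sin (k H0 * H0) = Real.sin θ0 := rfl
    rw [e1, e2, e3, Real.tan_eq_sin_div_cos]
    exact quot_formula_eta k' (z + h) H0 (k H0) (Real.sin θ0) (Real.cos θ0)
      (Real.sin (k H0 * (z + h))) (Real.cos (k H0 * (z + h))) hc0
  -- third conjunct: derivative in h
  · have hadd : HasDerivAt (fun h' : ℝ => η + h') 1 h := (hasDerivAt_id h).const_add η
    have hk1 : HasDerivAt (fun h' : ℝ => k (η + h')) (k' * 1) h := by
      have := hkd'.comp h hadd
      exact this
    have haddz : HasDerivAt (fun h' : ℝ => z + h') 1 h := (hasDerivAt_id h).const_add z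
    have hinN : HasDerivAt (fun h' : ℝ => k (η + h') * (z + h'))
        (k' * 1 * (z + h) + k H0 * 1) h := hk1.mul haddz
    have hN : HasDerivAt (fun h' : ℝ => Real.cos (k (η + h') * (z + h')))
        (-Real.sin (k H0 * (z + h)) * (k' * 1 * (z + h) + k H0 * 1)) h :=
      hinN.cos
    have hinD : HasDerivAt (fun h' : ℝ => k (η + h') * (η + h'))
        (k' * 1 * H0 + k H0 * 1) h := hk1.mul hadd
    have hD : HasDerivAt (fun h' : ℝ => Real.cos (k (η + h') * (η + h')))
        (-Real.sin (k H0 * H0) * (k' * 1 * H0 + k H0 * 1)) h :=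
      hinD.cos
    have hq := hN.div hD (by exact hc0)
    refine hq.congr_deriv (Eq.symm ?_)
    have e1 : Real.cos (k (η + h) * (η + h)) = Real.cos θ0 := rfl
    have e2 : Real.cos (k (η + h) * (z + h)) = Real.cos (k H0 * (z + h)) := rfl
    have e3 : Real.sin (k H0 * H0) = Real.sin θ0 := rfl
    rw [e1, e2, e3, Real.tan_eq_sin_div_cos]
    exact quot_formula_h k' (z + h) H0 (k H0) (Real.sin θ0) (Real.cos θ0)
      (Real.sin (k H0 * (z + h))) (Real.cos (k H0 * (z + h))) hc0
end
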